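/- arXiv:1604.08713 — 4 statements merged into one kernel-verified Lean document; each statement's English description precedes it below -/
import Mathlib

section
/- Let d ∈ ℕ and 1 ≤ p,q < ∞. There exists a constant c > 0 depending only on p, q, d such that for every infinite sequence S in [0,1)^d one has (∑_{j∈ℕ_{−1}^d} 2^{|j|(1−1/p)q} (∑_{m∈𝔻_j} |⟨D_S^N, h_{j,m}⟩|^p)^{q/p})^{1/q} ≥ c · N^{−1} (log N)^{d/q} for infinitely many N ∈ ℕ. -/
open MeasureTheory
open scoped ENNReal

noncomputable section

/-- The closed unit cube `[0,1]^d`. -/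
def unitCube (d : ℕ) : Set (Fin d → ℝ) := Set.univ.pi fun _ => Set.Icc (0:ℝ) 1

/-- The half-open unit cube `[0,1)^d`. -/
def unitCubeIco (d : ℕ) : Set (Fin d → ℝ) := Set.univ.pi fun _ => Set.Ico (0:ℝ) 1

/-- Discrepancy function of the first `N` points of the sequence `S` in `[0,1)^d`. -/
def discSeq (d : ℕ) (S : ℕ → Fin d → ℝ) (N : ℕ) (x : Fin d → ℝ) : ℝ :=
  (Nat.card {k : Fin N // ∀ i, S k i < x i} : ℝ) / N - ∏ i, x i

/-- One-dimensional Haar function `h_{j,m}`, with `h_{-1,0} = 1_{[0,1)}`. -/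
def haar1 (j : ℤ) (m : ℕ) (x : ℝ) : ℝ :=
  if j = -1 then (if 0 ≤ x ∧ x < 1 then 1 else 0)
  else if (m:ℝ)/2^j.toNat ≤ x ∧ x < ((m:ℝ) + 1/2)/2^j.toNat then 1
  else if ((m:ℝ) + 1/2)/2^j.toNat ≤ x ∧ x < ((m:ℝ)+1)/2^j.toNat then -1
  else 0

/-- `d`-dimensional (tensor product) Haar function. -/
def haarFn (d : ℕ) (j : Fin d → ℤ) (m : Fin d → ℕ) (x : Fin d → ℝ) : ℝ :=
  ∏ i, haar1 (j i) (m i) (x i)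

/-- Haar coefficient `⟨f, h_{j,m}⟩`. -/
def haarCoeff (d : ℕ) (f : (Fin d → ℝ) → ℝ) (j : Fin d → ℤ) (m : Fin d → ℕ) : ℝ :=
  ∫ x in unitCube d, f x * haarFn d j m x

/-- `|j| = max(j₁,0) + ⋯ + max(j_d,0)`. -/
def jnorm (d : ℕ) (j : Fin d → ℤ) : ℕ := ∑ i, (j i).toNat

/-- One-dimensional dyadic interval `I_{j,m}`. -/
def dyadicI (j : ℤ) (m : ℕ) : Set ℝ :=
  Set.Ico ((m:ℝ)/2^j.toNat) (((m:ℝ)+1)/2^j.toNat)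

/-- `d`-dimensional dyadic box `I_{j,m}`. -/
def dyadicBox (d : ℕ) (j : Fin d → ℤ) (m : Fin d → ℕ) : Set (Fin d → ℝ) :=
  Set.univ.pi fun i => dyadicI (j i) (m i)

/-- The index set `𝔻_j` as a finset. -/
def Dfin (d : ℕ) (j : Fin d → ℤ) : Finset (Fin d → ℕ) :=
  Fintype.piFinset fun i => Finset.range (2 ^ (j i).toNat)

/-- The index set `𝔻_j` for `j ∈ ℕ₀^d`. -/
def Dfin0 (d : ℕ) (j : Fin d → ℕ) : Finset (Fin d → ℕ) :=
  Fintype.piFinset fun i => Finset.range (2 ^ (j i))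

/-- Coordinate of the `k`-th point of a digital sequence over `𝔽₂` with generating
matrix `C` (`0`-based rows and columns). -/
def digitalCoord (C : ℕ → ℕ → ZMod 2) (k : ℕ) : ℝ :=
  ∑' i : ℕ,
    (((∑ ℓ ∈ Finset.range (k+1), C i ℓ * (if k.testBit ℓ then 1 else 0)).val : ℕ) : ℝ) / 2 ^ (i + 1)

/-- The digital sequence over `𝔽₂` generated by matrices `C 0, …, C (d-1)`. -/
def digitalSeq (d : ℕ) (C : Fin d → ℕ → ℕ → ZMod 2) : ℕ → Fin d → ℝ :=
  fun k j => digitalCoord (C j) k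

/-- `C 0, …, C (d-1)` generate an order `α` digital `(t,n,d)`-net over `𝔽₂`,
where the relevant submatrices have `q` rows (`q ≥ αn`) and `n` columns.
Row indices are `0`-based; the `1`-based row value of row `r` is `r+1`. -/
def IsOrderNet (α n t q d : ℕ) (C : Fin d → ℕ → ℕ → ZMod 2) : Prop :=
  ∀ (ν : Fin d → ℕ) (r : ∀ j : Fin d, Fin (ν j) → ℕ),
    (∀ j, StrictAnti (r j)) →
    (∀ j l, r j l < q) →
    (∑ j, ∑ l ∈ Finset.univ.filter (fun l : Fin (ν j) => (l:ℕ) < α), (r j l + 1)) ≤ α * n - t →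
    LinearIndependent (ZMod 2)
      (fun p : Σ j : Fin d, Fin (ν j) => fun col : Fin n => C p.1 (r p.1 p.2) col)

/-- `C 0, …, C (d-1)` generate an order `α` digital `(t,d)`-sequence over `𝔽₂`. -/
def IsOrderSeq (α t d : ℕ) (C : Fin d → ℕ → ℕ → ZMod 2) : Prop :=
  ∀ n : ℕ, t < α * n → IsOrderNet α n t (α * n) d C

/-- The condition `e_{i,k,ℓ} = 0` for all `k > 2ℓ` (in `1`-based indexing). -/
def Triangular2 (d : ℕ) (E : Fin d → ℕ → ℕ → ZMod 2) : Prop :=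
  ∀ i k ℓ, 2 * (ℓ + 1) < k + 1 → E i k ℓ = 0

open scoped Classical in
/-- The quantity `λ(U)⁻¹ ∑_{j ∈ ℕ₀^d} 2^{|j|} ∑_{m : I_{j,m} ⊆ U} ⟨f,h_{j,m}⟩²`. -/
def bmoSq (d : ℕ) (f : (Fin d → ℝ) → ℝ) (U : Set (Fin d → ℝ)) : ℝ≥0∞ :=
  (volume U)⁻¹ * ∑' j : Fin d → ℕ, ∑ m ∈ Dfin0 d j,
    if dyadicBox d (fun i => (j i : ℤ)) m ⊆ U then
      (2:ℝ≥0∞) ^ (∑ i, j i) * ENNReal.ofReal ((haarCoeff d f (fun i => (j i : ℤ)) m)^2)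
    else 0

/-- The BMO (semi-)norm `‖f | bmo^d‖`. -/
def bmoNorm (d : ℕ) (f : (Fin d → ℝ) → ℝ) : ℝ≥0∞ :=
  (⨆ U : {U : Set (Fin d → ℝ) // MeasurableSet U ∧ U ⊆ unitCubeIco d ∧ 0 < volume U},
    bmoSq d f U.1) ^ (1/2 : ℝ)

/-- The Orlicz norm of `f` on `[0,1)^d` with respect to the Young function `ψ`,
with the convention `inf ∅ = ∞`. -/
def orliczNorm (d : ℕ) (ψ : ℝ → ℝ) (f : (Fin d → ℝ) → ℝ) : ℝ≥0∞ :=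
  ⨅ K : {K : ℝ // 0 < K ∧ ∫ x in unitCubeIco d, ψ (|f x| / K) ≤ 1}, ENNReal.ofReal K.1

/-- `ψ` is a Young function which coincides with `exp(x^β) - 1` for all large `x`. -/
def IsYoungExp (β : ℝ) (ψ : ℝ → ℝ) : Prop :=
  ConvexOn ℝ (Set.Ici 0) ψ ∧ ψ 0 = 0 ∧ (∀ x : ℝ, 0 < x → 0 < ψ x) ∧
    ∃ x₀ : ℝ, ∀ x ≥ x₀, ψ x = Real.exp (x ^ β) - 1

/-- The set of valid Haar indices `j ∈ ℕ_{-1}^d`. -/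
def validJ (d : ℕ) : Set (Fin d → ℤ) := {j | ∀ i, -1 ≤ j i}

/-- The `q`-th power of the Haar-characterization of the `S^s_{p,q}B` norm:
`∑_{j ∈ ℕ_{-1}^d} 2^{|j|(s-1/p+1)q} (∑_{m ∈ 𝔻_j} |⟨f,h_{j,m}⟩|^p)^{q/p}`. -/
def besovSum (d : ℕ) (p q s : ℝ) (f : (Fin d → ℝ) → ℝ) : ℝ≥0∞ :=
  ∑' j : validJ d,
    ENNReal.ofReal ((2:ℝ) ^ ((jnorm d j.1 : ℝ) * (s - 1/p + 1) * q) *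
      (∑ m ∈ Dfin d j.1, |haarCoeff d f j.1 m| ^ p) ^ (q / p))

/-- Coordinate of the `k`-th point of a digital net with `q × n` generating matrix `C`. -/
def netCoord (q n : ℕ) (C : ℕ → ℕ → ZMod 2) (k : ℕ) : ℝ :=
  ∑ i ∈ Finset.range q,
    ((∑ ℓ ∈ Finset.range n, C i ℓ * (if k.testBit ℓ then 1 else 0)).val : ℝ) / 2 ^ (i + 1)

/-- `n_{μ+1}`, with the convention `n_{r+1} = log₂ N` (indices `1`-based, `n` stored `0`-based). -/
def nExt (r : ℕ) (n : Fin r → ℕ) (N : ℕ) (μ : ℕ) : ℝ :=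
  if h : μ < r then (n ⟨μ, h⟩ : ℝ) else Real.logb 2 N

/-- `n_μ`, with the convention `n_0 = 0` (indices `1`-based, `n` stored `0`-based). -/
def nPrev (r : ℕ) (n : Fin r → ℕ) (μ : ℕ) : ℝ :=
  if h : 1 ≤ μ ∧ μ ≤ r then (n ⟨μ - 1, by omega⟩ : ℝ) else 0

/-- The dyadic square function `Sf`, valued in `ℝ≥0∞`. -/
def sqFnE (d : ℕ) (f : (Fin d → ℝ) → ℝ) (x : Fin d → ℝ) : ℝ≥0∞ :=
  (∑' j : validJ d, ∑ m ∈ Dfin d j.1,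
    ENNReal.ofReal ((2:ℝ) ^ (2 * jnorm d j.1) * (haarCoeff d f j.1 m)^2 *
      (dyadicBox d j.1 m).indicator (fun _ => (1:ℝ)) x)) ^ (1/2 : ℝ)

/-- `sup_{p > 1} p^{-1/β} ‖f‖_{L_p([0,1]^d)}`. -/
def supLp (d : ℕ) (β : ℝ) (f : (Fin d → ℝ) → ℝ) : ℝ≥0∞ :=
  ⨆ p : {p : ℝ // 1 < p},
    ENNReal.ofReal ((p:ℝ) ^ (-(1/β))) * eLpNorm f (ENNReal.ofReal (p:ℝ)) (volume.restrict (unitCube d))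

/-- `‖f | 𝒟₀^d‖² = ∑_{j ∈ ℕ₀^d} 2^{|j|} ∑_{m ∈ 𝔻_j} ⟨f,h_{j,m}⟩²`. -/
def dNormSq (d : ℕ) (f : (Fin d → ℝ) → ℝ) : ℝ≥0∞ :=
  ∑' j : Fin d → ℕ, ∑ m ∈ Dfin0 d j,
    ENNReal.ofReal ((2:ℝ) ^ (∑ i, j i) * (haarCoeff d f (fun i => (j i : ℤ)) m)^2)

/-- `‖f | 𝒟₀^d‖`. -/
def dNorm (d : ℕ) (f : (Fin d → ℝ) → ℝ) : ℝ≥0∞ := (dNormSq d f) ^ (1/2 : ℝ)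

section AuxHaar

open MeasureTheory

lemma haar1_natCast_eq (j m : ℕ) (x : ℝ) :
    haar1 (j:ℤ) m x =
      (if (m:ℝ)/2^j ≤ x ∧ x < ((m:ℝ) + 1/2)/2^j then (1:ℝ)
       else if ((m:ℝ) + 1/2)/2^j ≤ x ∧ x < ((m:ℝ)+1)/2^j then -1 else 0) := by
  have hj : (j:ℤ) ≠ -1 := by omega
  simp only [haar1, hj, if_false, Int.toNat_natCast]

lemma abs_haar1_le_one (j : ℤ) (m : ℕ) (x : ℝ) : |haar1 j m x| ≤ 1 := by
  unfold haar1; split_ifs <;> norm_num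

lemma measurable_haar1 (j : ℤ) (m : ℕ) : Measurable (haar1 j m) := by
  unfold haar1
  by_cases h : j = -1
  · simp only [h, if_true, reduceIte]
    exact Measurable.ite (measurableSet_Ico (a := (0:ℝ)) (b := 1)) measurable_const
      measurable_const
  · simp only [h, if_false]
    refine Measurable.ite (measurableSet_Ico (a := ((m:ℝ)/2^j.toNat)) (b := ((m:ℝ)+1/2)/2^j.toNat))
      measurable_const ?_
    exact Measurable.ite
      (measurableSet_Ico (a := (((m:ℝ)+1/2)/2^j.toNat)) (b := ((m:ℝ)+1)/2^j.toNat))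
      measurable_const measurable_const

lemma haar1_support (j m : ℕ) {x : ℝ} (h : haar1 (j:ℤ) m x ≠ 0) :
    (m:ℝ)/2^j ≤ x ∧ x < ((m:ℝ)+1)/2^j := by
  have h2 : (0:ℝ) < 2^j := by positivity
  have key : ((m:ℝ)+1/2)/2^j ≤ ((m:ℝ)+1)/2^j := by gcongr <;> linarith
  have key2 : (m:ℝ)/2^j ≤ ((m:ℝ)+1/2)/2^j := by gcongr <;> linarith
  rw [haar1_natCast_eq] at h
  split_ifs at h with h1 h2'
  · exact ⟨h1.1, lt_of_lt_of_le h1.2 key⟩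
  · exact ⟨le_trans key2 h2'.1, h2'.2⟩
  · exact absurd rfl h

end AuxHaar
section AuxHaar2

open MeasureTheory

/-- The fundamental splitting of an integral against a Haar function. -/
lemma integral_mul_haar1 (j m : ℕ) (hm : m < 2^j) (φ : ℝ → ℝ)
    (h1 : IntegrableOn φ (Set.Ico ((m:ℝ)/2^j) (((m:ℝ)+1/2)/2^j)))
    (h2 : IntegrableOn φ (Set.Ico (((m:ℝ)+1/2)/2^j) (((m:ℝ)+1)/2^j))) :
    ∫ x in Set.Icc (0:ℝ) 1, φ x * haar1 (j:ℤ) m x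
      = (∫ x in Set.Ico ((m:ℝ)/2^j) (((m:ℝ)+1/2)/2^j), φ x)
        - ∫ x in Set.Ico (((m:ℝ)+1/2)/2^j) (((m:ℝ)+1)/2^j), φ x := by
  have h2p : (0:ℝ) < 2^j := by positivity
  set a := (m:ℝ)/2^j with ha
  set c := ((m:ℝ)+1/2)/2^j with hc
  set b := ((m:ℝ)+1)/2^j with hb
  have key : ∀ x, φ x * haar1 (j:ℤ) m x
      = (Set.Ico a c).indicator φ x - (Set.Ico c b).indicator φ x := by
    intro x
    rw [haar1_natCast_eq]
    simp only [Set.indicator_apply, Set.mem_Ico]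
    split_ifs with hA hB hB
    · exfalso
      have h1' := hA.2
      have h2' := hB.1
      rw [hc] at h2'
      linarith
    · ring
    · ring
    · ring
  have hsub1 : Set.Ico a c ⊆ Set.Icc (0:ℝ) 1 := by
    intro x hx
    rcases hx with ⟨hx1, hx2⟩
    constructor
    · have : (0:ℝ) ≤ a := by positivity
      linarith
    · have hc1 : c ≤ 1 := by
        rw [hc, div_le_one h2p]
        have : (m:ℝ) + 1 ≤ 2^j := by exact_mod_cast hm
        linarith
      linarith
  have hsub2 : Set.Ico c b ⊆ Set.Icc (0:ℝ) 1 := by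
    intro x hx
    rcases hx with ⟨hx1, hx2⟩
    constructor
    · have : (0:ℝ) ≤ c := by positivity
      linarith
    · have hb1 : b ≤ 1 := by
        rw [hb, div_le_one h2p]
        exact_mod_cast hm
      linarith
  rw [integral_congr_ae (Filter.Eventually.of_forall key)]
  rw [integral_sub ((h1.integrable_indicator measurableSet_Ico).integrableOn)
    ((h2.integrable_indicator measurableSet_Ico).integrableOn)]
  rw [setIntegral_indicator measurableSet_Ico, setIntegral_indicator measurableSet_Ico,
    Set.inter_eq_self_of_subset_right hsub1, Set.inter_eq_self_of_subset_right hsub2]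

lemma haar1_int_zero (j m : ℕ) (hm : m < 2^j) :
    ∫ x in Set.Icc (0:ℝ) 1, haar1 (j:ℤ) m x = 0 := by
  have h2p : (0:ℝ) < 2^j := by positivity
  have := integral_mul_haar1 j m hm (fun _ => (1:ℝ))
    (integrableOn_const measure_Ico_lt_top.ne)
    (integrableOn_const measure_Ico_lt_top.ne)
  simp only [one_mul] at this
  rw [this, setIntegral_const, setIntegral_const, measureReal_def, measureReal_def, Real.volume_Ico, Real.volume_Ico]
  rw [ENNReal.toReal_ofReal (by rw [sub_nonneg]; gcongr <;> linarith),
    ENNReal.toReal_ofReal (by rw [sub_nonneg]; gcongr <;> linarith)]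
  simp only [smul_eq_mul, mul_one]
  ring

/-- value of `∫ x h_{j,m}`. -/
lemma pInt_eq (j m : ℕ) (hm : m < 2^j) :
    ∫ x in Set.Icc (0:ℝ) 1, x * haar1 (j:ℤ) m x = -((4:ℝ)⁻¹)^(j+1) := by
  have h2p : (0:ℝ) < 2^j := by positivity
  have hid : ∀ u v : ℝ, u ≤ v → ∫ x in Set.Ico u v, x = (v^2 - u^2)/2 := by
    intro u v huv
    rw [MeasureTheory.integral_Ico_eq_integral_Ioo, ← MeasureTheory.integral_Ioc_eq_integral_Ioo,
      ← intervalIntegral.integral_of_le huv, integral_id]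
  have hic : ∀ u v : ℝ, IntegrableOn (fun x : ℝ => x) (Set.Ico u v) := by
    intro u v
    exact (continuous_id.integrableOn_Icc).mono_set Set.Ico_subset_Icc_self
  have hac : (m:ℝ)/2^j ≤ ((m:ℝ)+1/2)/2^j := by gcongr <;> linarith
  have hcb : ((m:ℝ)+1/2)/2^j ≤ ((m:ℝ)+1)/2^j := by gcongr <;> linarith
  rw [integral_mul_haar1 j m hm _ (hic _ _) (hic _ _), hid _ _ hac, hid _ _ hcb]
  have h4 : ((4:ℝ)⁻¹)^(j+1) = 1/(2^j * 2^j * 4) := by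
    rw [inv_pow, pow_succ]
    rw [show (4:ℝ) = 2*2 by norm_num, mul_pow]
    field_simp
  rw [h4]
  field_simp
  ring

end AuxHaar2
section AuxG

open MeasureTheory

/-- `g(z) = ∫ 1_{z<x} h_{j,m}(x) dx`. -/
noncomputable def gInt (j m : ℕ) (z : ℝ) : ℝ :=
  ∫ x in Set.Icc (0:ℝ) 1, (if z < x then (1:ℝ) else 0) * haar1 (j:ℤ) m x

lemma measurable_step (z : ℝ) : Measurable (fun x : ℝ => if z < x then (1:ℝ) else 0) :=
  Measurable.ite (measurableSet_Ioi (a := z)) measurable_const measurable_const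

lemma integrableOn_step (z : ℝ) {s : Set ℝ} (hs : volume s ≠ ⊤) :
    IntegrableOn (fun x : ℝ => if z < x then (1:ℝ) else 0) s := by
  refine Measure.integrableOn_of_bounded hs (measurable_step z).aestronglyMeasurable
    (M := 1) (ae_of_all _ ?_)
  intro x
  rw [Real.norm_eq_abs]
  split_ifs <;> norm_num

lemma gInt_eq_zero_left (j m : ℕ) (hm : m < 2^j) {z : ℝ} (hz : z < (m:ℝ)/2^j) :
    gInt j m z = 0 := by
  have key : ∀ x : ℝ, (if z < x then (1:ℝ) else 0) * haar1 (j:ℤ) m x = haar1 (j:ℤ) m x := by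
    intro x
    by_cases h : haar1 (j:ℤ) m x = 0
    · rw [h, mul_zero]
    · have := (haar1_support j m h).1
      rw [if_pos (by linarith), one_mul]
  unfold gInt
  rw [integral_congr_ae (Filter.Eventually.of_forall key)]
  exact haar1_int_zero j m hm

lemma gInt_eq_zero_right (j m : ℕ) {z : ℝ} (hz : ((m:ℝ)+1)/2^j ≤ z) :
    gInt j m z = 0 := by
  have key : ∀ x : ℝ, (if z < x then (1:ℝ) else 0) * haar1 (j:ℤ) m x = 0 := by
    intro x
    by_cases h : haar1 (j:ℤ) m x = 0
    · rw [h, mul_zero]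
    · have := (haar1_support j m h).2
      rw [if_neg (by linarith), zero_mul]
  unfold gInt
  rw [integral_congr_ae (Filter.Eventually.of_forall key)]
  exact integral_zero _ _

lemma gInt_mem (j m : ℕ) (hm : m < 2^j) {z : ℝ} (h : gInt j m z ≠ 0) :
    (m:ℝ)/2^j ≤ z ∧ z < ((m:ℝ)+1)/2^j := by
  constructor
  · by_contra hc
    exact h (gInt_eq_zero_left j m hm (not_le.1 hc))
  · by_contra hc
    exact h (gInt_eq_zero_right j m (not_lt.1 hc))

lemma abs_gInt_le (j m : ℕ) (hm : m < 2^j) (z : ℝ) : |gInt j m z| ≤ ((2:ℝ)⁻¹)^j := by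
  have h2p : (0:ℝ) < 2^j := by positivity
  have hlen : ∀ u v : ℝ, u ≤ v → |∫ x in Set.Ico u v, (if z < x then (1:ℝ) else 0)| ≤ v - u := by
    intro u v huv
    have := norm_setIntegral_le_of_norm_le_const (μ := volume)
      (s := Set.Ico u v) (C := 1)
      (f := fun x => if z < x then (1:ℝ) else 0) measure_Ico_lt_top
      (fun x _ => by simp only [Real.norm_eq_abs]; split_ifs <;> norm_num)
    rw [Real.norm_eq_abs, measureReal_def, Real.volume_Ico, one_mul, ENNReal.toReal_ofReal (by linarith)] at this
    exact this
  have hac : (m:ℝ)/2^j ≤ ((m:ℝ)+1/2)/2^j := by gcongr; linarith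
  have hcb : ((m:ℝ)+1/2)/2^j ≤ ((m:ℝ)+1)/2^j := by gcongr; linarith
  unfold gInt
  rw [integral_mul_haar1 j m hm _ (integrableOn_step z measure_Ico_lt_top.ne)
    (integrableOn_step z measure_Ico_lt_top.ne)]
  calc |(∫ x in Set.Ico ((m:ℝ)/2^j) (((m:ℝ)+1/2)/2^j), (if z < x then (1:ℝ) else 0))
        - ∫ x in Set.Ico (((m:ℝ)+1/2)/2^j) (((m:ℝ)+1)/2^j), (if z < x then (1:ℝ) else 0)|
      ≤ |∫ x in Set.Ico ((m:ℝ)/2^j) (((m:ℝ)+1/2)/2^j), (if z < x then (1:ℝ) else 0)|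
        + |∫ x in Set.Ico (((m:ℝ)+1/2)/2^j) (((m:ℝ)+1)/2^j), (if z < x then (1:ℝ) else 0)| :=
      abs_sub _ _
    _ ≤ (((m:ℝ)+1/2)/2^j - (m:ℝ)/2^j) + (((m:ℝ)+1)/2^j - ((m:ℝ)+1/2)/2^j) :=
      add_le_add (hlen _ _ hac) (hlen _ _ hcb)
    _ = ((2:ℝ)⁻¹)^j := by
      rw [inv_pow]
      field_simp
      ring

end AuxG
section AuxFubini

open MeasureTheory

/-- `∫ x h_{j,m}` as a definition. -/
noncomputable def pInt (j m : ℕ) : ℝ := ∫ x in Set.Icc (0:ℝ) 1, x * haar1 (j:ℤ) m x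

lemma pInt_val (j m : ℕ) (hm : m < 2^j) : pInt j m = -((4:ℝ)⁻¹)^(j+1) := pInt_eq j m hm

lemma abs_pInt (j m : ℕ) (hm : m < 2^j) : |pInt j m| = ((4:ℝ)⁻¹)^(j+1) := by
  rw [pInt_val j m hm, abs_neg, abs_of_nonneg (by positivity)]

lemma integral_unitCube_prod {d : ℕ} (φ : Fin d → ℝ → ℝ) :
    ∫ x in unitCube d, ∏ i, φ i (x i) = ∏ i, ∫ t in Set.Icc (0:ℝ) 1, φ i t := by
  have hmeas : MeasurableSet (unitCube d) := MeasurableSet.univ_pi fun _ => measurableSet_Icc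
  rw [← MeasureTheory.integral_indicator hmeas]
  have key : ∀ x : Fin d → ℝ, (unitCube d).indicator (fun y => ∏ i, φ i (y i)) x
      = ∏ i, (Set.Icc (0:ℝ) 1).indicator (φ i) (x i) := by
    intro x
    by_cases h : x ∈ unitCube d
    · rw [Set.indicator_of_mem h]
      exact Finset.prod_congr rfl fun i _ =>
        (Set.indicator_of_mem (Set.mem_univ_pi.1 h i) (φ i)).symm
    · rw [Set.indicator_of_notMem h]
      obtain ⟨i0, hi0⟩ : ∃ i, x i ∉ Set.Icc (0:ℝ) 1 := by
        by_contra hc; push_neg at hc; exact h (Set.mem_univ_pi.2 hc)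
      exact (Finset.prod_eq_zero (Finset.mem_univ i0) (Set.indicator_of_notMem hi0 (φ i0))).symm
  rw [integral_congr_ae (Filter.Eventually.of_forall key)]
  rw [MeasureTheory.volume_pi, MeasureTheory.integral_fintype_prod_eq_prod
    (fun i t => (Set.Icc (0:ℝ) 1).indicator (φ i) t)]
  exact Finset.prod_congr rfl fun i _ => MeasureTheory.integral_indicator measurableSet_Icc

lemma volume_unitCube {d : ℕ} : volume (unitCube d) = 1 := by
  rw [show unitCube d = Set.univ.pi fun _ : Fin d => Set.Icc (0:ℝ) 1 from rfl, volume_pi_pi]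
  simp [Real.volume_Icc]

lemma integrableOn_unitCube_of_bdd {d : ℕ} {f : (Fin d → ℝ) → ℝ} (hf : Measurable f) (C : ℝ)
    (h : ∀ x ∈ unitCube d, |f x| ≤ C) : IntegrableOn f (unitCube d) := by
  refine Measure.integrableOn_of_bounded (M := C) ?_ hf.aestronglyMeasurable ?_
  · rw [volume_unitCube]; exact ENNReal.one_ne_top
  · exact (ae_restrict_mem (MeasurableSet.univ_pi fun _ => measurableSet_Icc)).mono
      (fun x hx => by rw [Real.norm_eq_abs]; exact h x hx)

lemma abs_prod_le_one {d : ℕ} (f : Fin d → ℝ) (h : ∀ i, |f i| ≤ 1) : |∏ i, f i| ≤ 1 := by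
  rw [Finset.abs_prod]
  exact Finset.prod_le_one (fun i _ => abs_nonneg _) (fun i _ => h i)

/-- Decomposition of the Haar coefficient of the discrepancy function. -/
lemma haarCoeff_discSeq {d : ℕ} (S : ℕ → Fin d → ℝ) (j m : Fin d → ℕ) (k : ℕ) :
    haarCoeff d (discSeq d S k) (fun i => (j i : ℤ)) m
      = (∑ l ∈ Finset.range k, ∏ i, gInt (j i) (m i) (S l i)) / k
        - ∏ i, pInt (j i) (m i) := by
  have hcount : ∀ x : Fin d → ℝ, (Nat.card {t : Fin k // ∀ i, S t i < x i} : ℝ)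
      = ∑ l ∈ Finset.range k, ∏ i, (if S l i < x i then (1:ℝ) else 0) := by
    intro x
    rw [Nat.card_eq_fintype_card, Fintype.card_subtype, Finset.card_filter]
    push_cast
    rw [← Fin.sum_univ_eq_sum_range (fun l => ∏ i, (if S l i < x i then (1:ℝ) else 0))]
    refine Finset.sum_congr rfl fun t _ => ?_
    rw [Finset.prod_boole]
    simp
  have hpt : ∀ x : Fin d → ℝ, discSeq d S k x * haarFn d (fun i => (j i:ℤ)) m x
      = (∑ l ∈ Finset.range k,
            ∏ i, ((if S l i < x i then (1:ℝ) else 0) * haar1 ((j i):ℤ) (m i) (x i))) / k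
        - ∏ i, (x i * haar1 ((j i):ℤ) (m i) (x i)) := by
    intro x
    unfold discSeq haarFn
    rw [hcount x, sub_mul, div_mul_eq_mul_div, Finset.sum_mul, ← Finset.prod_mul_distrib]
    congr 1
    · congr 1
      exact Finset.sum_congr rfl fun l _ => (Finset.prod_mul_distrib).symm
  have measF : ∀ l : ℕ, Measurable (fun x : Fin d → ℝ =>
      ∏ i, ((if S l i < x i then (1:ℝ) else 0) * haar1 ((j i):ℤ) (m i) (x i))) := by
    intro l
    refine Finset.measurable_prod _ fun i _ => Measurable.mul ?_ ?_
    · exact (measurable_step (S l i)).comp (measurable_pi_apply i)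
    · exact (measurable_haar1 _ _).comp (measurable_pi_apply i)
  have intF : ∀ l : ℕ, IntegrableOn (fun x : Fin d → ℝ =>
      ∏ i, ((if S l i < x i then (1:ℝ) else 0) * haar1 ((j i):ℤ) (m i) (x i)))
      (unitCube d) := by
    intro l
    refine integrableOn_unitCube_of_bdd (measF l) 1 fun x _ => ?_
    refine abs_prod_le_one _ fun i => ?_
    rw [abs_mul]
    refine mul_le_one₀ ?_ (abs_nonneg _) (abs_haar1_le_one _ _ _)
    split_ifs <;> norm_num
  have measG : Measurable (fun x : Fin d → ℝ =>
      ∏ i, (x i * haar1 ((j i):ℤ) (m i) (x i))) := by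
    refine Finset.measurable_prod _ fun i _ => Measurable.mul (measurable_pi_apply i) ?_
    exact (measurable_haar1 _ _).comp (measurable_pi_apply i)
  have intG : IntegrableOn (fun x : Fin d → ℝ =>
      ∏ i, (x i * haar1 ((j i):ℤ) (m i) (x i))) (unitCube d) := by
    refine integrableOn_unitCube_of_bdd measG 1 fun x hx => ?_
    refine abs_prod_le_one _ fun i => ?_
    rw [abs_mul]
    refine mul_le_one₀ ?_ (abs_nonneg _) (abs_haar1_le_one _ _ _)
    have := Set.mem_univ_pi.1 hx i
    rw [abs_le]
    exact ⟨by linarith [this.1], this.2⟩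
  have intA : IntegrableOn (fun x : Fin d → ℝ => (∑ l ∈ Finset.range k,
      ∏ i, ((if S l i < x i then (1:ℝ) else 0) * haar1 ((j i):ℤ) (m i) (x i))) / k)
      (unitCube d) := by
    refine Integrable.div_const ?_ _
    exact integrable_finset_sum _ fun l _ => intF l
  unfold haarCoeff
  rw [integral_congr_ae (Filter.Eventually.of_forall hpt)]
  rw [integral_sub intA intG]
  congr 1
  · rw [integral_div, integral_finset_sum _ fun l _ => intF l]
    congr 1
    refine Finset.sum_congr rfl fun l _ => ?_
    exact integral_unitCube_prod
      (fun i t => (if S l i < t then (1:ℝ) else 0) * haar1 ((j i):ℤ) (m i) t)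
  · exact integral_unitCube_prod (fun i t => t * haar1 ((j i):ℤ) (m i) t)

end AuxFubini
section AuxDiscrete

open MeasureTheory

lemma sum_Ioc_eps (a L : ℕ) :
    ∑ k ∈ Finset.Ioc a (a+2*L), (if k ≤ a+L then (1:ℝ) else -1) = 0 := by
  rw [← Finset.sum_Ioc_consecutive _ (by omega : a ≤ a+L) (by omega : a+L ≤ a+2*L)]
  have e1 : ∑ k ∈ Finset.Ioc a (a+L), (if k ≤ a+L then (1:ℝ) else -1)
      = ∑ _k ∈ Finset.Ioc a (a+L), (1:ℝ) := by
    refine Finset.sum_congr rfl fun k hk => ?_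
    rw [if_pos (Finset.mem_Ioc.1 hk).2]
  have e2 : ∑ k ∈ Finset.Ioc (a+L) (a+2*L), (if k ≤ a+L then (1:ℝ) else -1)
      = ∑ _k ∈ Finset.Ioc (a+L) (a+2*L), (-1:ℝ) := by
    refine Finset.sum_congr rfl fun k hk => ?_
    rw [if_neg (by have := (Finset.mem_Ioc.1 hk).1; omega)]
  rw [e1, e2, Finset.sum_const, Finset.sum_const, Nat.card_Ioc, Nat.card_Ioc]
  have : a + L - a = L := by omega
  have h2 : a + 2*L - (a+L) = L := by omega
  rw [this, h2]
  simp

lemma sum_Ioc_eps_mul (a L : ℕ) :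
    ∑ k ∈ Finset.Ioc a (a+2*L), (if k ≤ a+L then (1:ℝ) else -1) * (k:ℝ) = -(L:ℝ)^2 := by
  rw [← Finset.sum_Ioc_consecutive _ (by omega : a ≤ a+L) (by omega : a+L ≤ a+2*L)]
  have e1 : ∑ k ∈ Finset.Ioc a (a+L), (if k ≤ a+L then (1:ℝ) else -1) * (k:ℝ)
      = ∑ k ∈ Finset.Ioc a (a+L), (k:ℝ) := by
    refine Finset.sum_congr rfl fun k hk => ?_
    rw [if_pos (Finset.mem_Ioc.1 hk).2, one_mul]
  have e2 : ∑ k ∈ Finset.Ioc (a+L) (a+2*L), (if k ≤ a+L then (1:ℝ) else -1) * (k:ℝ)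
      = -∑ k ∈ Finset.Ioc (a+L) (a+2*L), (k:ℝ) := by
    rw [← Finset.sum_neg_distrib]
    refine Finset.sum_congr rfl fun k hk => ?_
    rw [if_neg (by have := (Finset.mem_Ioc.1 hk).1; omega), neg_one_mul]
  have e3 : ∑ k ∈ Finset.Ioc (a+L) (a+2*L), (k:ℝ)
      = (∑ k ∈ Finset.Ioc a (a+L), (k:ℝ)) + (L:ℝ)*(L:ℝ) := by
    have hmap : Finset.Ioc (a+L) (a+2*L) = (Finset.Ioc a (a+L)).map
        (addRightEmbedding L) := by
      rw [Finset.map_add_right_Ioc]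
      congr 1
      omega
    rw [hmap, Finset.sum_map]
    have : ∀ k ∈ Finset.Ioc a (a+L), ((addRightEmbedding L k : ℕ) : ℝ) = (k:ℝ) + (L:ℝ) := by
      intro k _
      simp [addRightEmbedding]
    rw [Finset.sum_congr rfl this, Finset.sum_add_distrib, Finset.sum_const, Nat.card_Ioc]
    have : a + L - a = L := by omega
    rw [this]
    simp [mul_comm]
  rw [e1, e2, e3]
  ring

/-- The key discrete identity: on an empty box the signed sum of weighted Haar coefficients
of the discrepancy functions is the explicit linear-term value. -/
lemma key_identity {d : ℕ} (S : ℕ → Fin d → ℝ) (j m : Fin d → ℕ) (a L : ℕ)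
    (hempty : ∀ l, a ≤ l → l < a + 2*L → ∏ i, gInt (j i) (m i) (S l i) = 0) :
    ∑ k ∈ Finset.Ioc a (a+2*L), (if k ≤ a+L then (1:ℝ) else -1)
        * ((k:ℝ) * haarCoeff d (discSeq d S k) (fun i => (j i:ℤ)) m)
      = (∏ i, pInt (j i) (m i)) * (L:ℝ)^2 := by
  set α : ℕ → ℝ := fun l => ∏ i, gInt (j i) (m i) (S l i) with hα
  set P : ℝ := ∏ i, pInt (j i) (m i) with hP
  have hc : ∀ k ∈ Finset.Ioc a (a+2*L),
      (if k ≤ a+L then (1:ℝ) else -1) * ((k:ℝ) * haarCoeff d (discSeq d S k) (fun i => (j i:ℤ)) m)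
      = (if k ≤ a+L then (1:ℝ) else -1) * ((∑ l ∈ Finset.range k, α l) - (k:ℝ) * P) := by
    intro k hk
    have hk1 : 0 < k := lt_of_le_of_lt (Nat.zero_le a) (Finset.mem_Ioc.1 hk).1
    have hk0 : (k:ℝ) ≠ 0 := Nat.cast_ne_zero.2 (by omega)
    rw [haarCoeff_discSeq S j m k]
    rw [mul_sub, mul_div_cancel₀ _ hk0]
  rw [Finset.sum_congr rfl hc]
  have expand : ∀ k ∈ Finset.Ioc a (a+2*L),
      (if k ≤ a+L then (1:ℝ) else -1) * ((∑ l ∈ Finset.range k, α l) - (k:ℝ) * P)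
      = (∑ l ∈ Finset.range (a+2*L), (if k ≤ a+L then (1:ℝ) else -1) * (if l < k then α l else 0))
        - ((if k ≤ a+L then (1:ℝ) else -1) * (k:ℝ)) * P := by
    intro k hk
    have hkB : k ≤ a + 2*L := (Finset.mem_Ioc.1 hk).2
    have hrange : ∑ l ∈ Finset.range k, α l
        = ∑ l ∈ Finset.range (a+2*L), (if l < k then α l else 0) := by
      rw [Finset.sum_ite, Finset.sum_const_zero, add_zero]
      congr 1
      ext l
      simp only [Finset.mem_filter, Finset.mem_range]
      omega
    rw [hrange, mul_sub, Finset.mul_sum]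
    ring
  rw [Finset.sum_congr rfl expand, Finset.sum_sub_distrib]
  have h2 : ∑ k ∈ Finset.Ioc a (a+2*L), ((if k ≤ a+L then (1:ℝ) else -1) * (k:ℝ)) * P
      = -(L:ℝ)^2 * P := by
    rw [← Finset.sum_mul, sum_Ioc_eps_mul]
  have h1 : ∑ k ∈ Finset.Ioc a (a+2*L), ∑ l ∈ Finset.range (a+2*L),
      (if k ≤ a+L then (1:ℝ) else -1) * (if l < k then α l else 0) = 0 := by
    rw [Finset.sum_comm]
    refine Finset.sum_eq_zero fun l hl => ?_
    by_cases hla : a ≤ l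
    · have hz : α l = 0 := hempty l hla (Finset.mem_range.1 hl)
      refine Finset.sum_eq_zero fun k _ => ?_
      rw [hz]
      simp
    · have hone : ∀ k ∈ Finset.Ioc a (a+2*L),
          (if k ≤ a+L then (1:ℝ) else -1) * (if l < k then α l else 0)
          = (if k ≤ a+L then (1:ℝ) else -1) * α l := by
        intro k hk
        have hlk : l < k := by have := (Finset.mem_Ioc.1 hk).1; omega
        rw [if_pos hlk]
      rw [Finset.sum_congr rfl hone, ← Finset.sum_mul, sum_Ioc_eps, zero_mul]
  rw [h1, h2]
  ring

end AuxDiscrete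
section AuxJensen

lemma jensen_rpow {ι : Type*} (s : Finset ι) (f : ι → ℝ) (hf : ∀ i ∈ s, 0 ≤ f i) {θ : ℝ}
    (hθ : 1 ≤ θ) : (∑ i ∈ s, f i) ^ θ ≤ (s.card : ℝ) ^ (θ - 1) * ∑ i ∈ s, (f i) ^ θ := by
  rcases Finset.eq_empty_or_nonempty s with rfl | hne
  · simp [Real.zero_rpow (by linarith : θ ≠ 0)]
  · have hcard : (0:ℝ) < s.card := by exact_mod_cast Finset.card_pos.2 hne
    have key := Real.rpow_arith_mean_le_arith_mean_rpow s (fun _ => (s.card:ℝ)⁻¹) f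
      (fun i _ => by positivity) (by rw [Finset.sum_const, nsmul_eq_mul]; field_simp) hf hθ
    rw [← Finset.mul_sum, ← Finset.mul_sum] at key
    have hsum : 0 ≤ ∑ i ∈ s, f i := Finset.sum_nonneg hf
    rw [Real.mul_rpow (by positivity) hsum] at key
    calc (∑ i ∈ s, f i)^θ
        = (s.card:ℝ)^θ * ((s.card:ℝ)⁻¹^θ * (∑ i ∈ s, f i)^θ) := by
          rw [← mul_assoc, ← Real.mul_rpow (le_of_lt hcard) (by positivity),
            mul_inv_cancel₀ (ne_of_gt hcard), Real.one_rpow, one_mul]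
      _ ≤ (s.card:ℝ)^θ * ((s.card:ℝ)⁻¹ * ∑ i ∈ s, f i ^ θ) :=
          mul_le_mul_of_nonneg_left key (Real.rpow_nonneg (le_of_lt hcard) θ)
      _ = (s.card:ℝ)^(θ-1) * ∑ i ∈ s, f i ^ θ := by
          rw [← mul_assoc, Real.rpow_sub hcard, Real.rpow_one, div_eq_mul_inv]

lemma sum_blocks (f : ℕ → ℝ) (c T : ℕ) :
    ∑ m0 ∈ Finset.range T, ∑ k ∈ Finset.Ioc (c*m0) (c*m0+c), f k
      = ∑ k ∈ Finset.Ioc 0 (c*T), f k := by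
  induction T with
  | zero => simp
  | succ T ih =>
    rw [Finset.sum_range_succ, ih,
      Finset.sum_Ioc_consecutive f (Nat.zero_le _) (by omega : c*T ≤ c*T + c)]
    have hcc : c*T + c = c*(T+1) := by ring
    rw [hcc]

lemma abs_prod_pInt {d : ℕ} (j m : Fin d → ℕ) (hm : ∀ i, m i < 2^(j i)) :
    |∏ i, pInt (j i) (m i)| = ((4:ℝ)⁻¹)^((∑ i, j i) + d) := by
  rw [Finset.abs_prod, Finset.prod_congr rfl (fun i _ => abs_pInt (j i) (m i) (hm i)),
    Finset.prod_pow_eq_pow_sum]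
  congr 1
  rw [Finset.sum_add_distrib, Finset.sum_const, Finset.card_univ, Fintype.card_fin,
    smul_eq_mul, mul_one]

end AuxJensen
section PerJ

open MeasureTheory

/-- Core "Roth/Proinov" estimate for a fixed frequency vector `j`. -/
lemma per_j_bound {d : ℕ} (S : ℕ → Fin d → ℝ) {r : ℝ} (hr : 1 ≤ r) (μ : ℕ)
    (j : Fin d → ℕ) (hn2 : 2 ≤ ∑ i, j i) (hnμ : ∑ i, j i ≤ μ + 1) :
    ((4:ℝ)⁻¹ ^ (d+2)) ^ r * 2^μ
      ≤ ((2:ℝ)^(∑ i, j i)) ^ (r-1) *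
        ∑ k ∈ Finset.Ioc (0:ℕ) (2^μ), (k:ℝ)^r *
          ∑ m ∈ Dfin0 d j, |haarCoeff d (discSeq d S k) (fun i => (j i:ℤ)) m| ^ r := by
  classical
  set n := ∑ i, j i with hn
  set j0 := μ + 1 - n with hj0
  set L := 2^(n-2) with hL
  have hBL : 2^(n-1) = 2*L := by
    rw [hL, ← pow_succ']
    congr 1
    omega
  have htot : 2^j0 * (2*L) = 2^μ := by
    rw [← hBL, ← pow_add]
    congr 1
    omega
  set cf : (Fin d → ℕ) → ℕ → ℝ :=
    fun m k => haarCoeff d (discSeq d S k) (fun i => (j i:ℤ)) m with hcf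
  set Empt : ℕ × (Fin d → ℕ) → Prop :=
    fun p => ∀ l, 2*L*p.1 ≤ l → l < 2*L*p.1 + 2*L → ∏ i, gInt (j i) (p.2 i) (S l i) = 0
    with hEmpt
  set Em := (Finset.range (2^j0) ×ˢ Dfin0 d j).filter Empt with hEm
  -- counting
  have hDcard : (Dfin0 d j).card = 2^n := by
    rw [Dfin0, Fintype.card_piFinset]
    simp only [Finset.card_range]
    rw [Finset.prod_pow_eq_pow_sum]
  have htotcard : (Finset.range (2^j0) ×ˢ Dfin0 d j).card = 2^(μ+1) := by
    rw [Finset.card_product, Finset.card_range, hDcard, ← pow_add]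
    congr 1
    omega
  have hcompl : ((Finset.range (2^j0) ×ˢ Dfin0 d j).filter (fun p => ¬ Empt p)).card ≤ 2^μ := by
    have hsub : (Finset.range (2^j0) ×ˢ Dfin0 d j).filter (fun p => ¬ Empt p)
        ⊆ (Finset.range (2^μ)).image
          (fun l => (l / (2*L), fun i => ⌊S l i * 2^(j i)⌋₊)) := by
      intro p hp
      rw [Finset.mem_filter] at hp
      obtain ⟨hmem, hne⟩ := hp
      rw [Finset.mem_product] at hmem
      simp only [hEmpt, not_forall] at hne
      obtain ⟨l, h1, h2, h3⟩ := hne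
      rw [Finset.mem_image]
      refine ⟨l, ?_, ?_⟩
      · rw [Finset.mem_range]
        have hm0 : p.1 < 2^j0 := Finset.mem_range.1 hmem.1
        calc l < 2*L*p.1 + 2*L := h2
          _ = (p.1+1) * (2*L) := by ring
          _ ≤ 2^j0 * (2*L) := by
              apply Nat.mul_le_mul_right
              omega
          _ = 2^μ := htot
      · have e1 : p.1 * (2*L) ≤ l := by rw [mul_comm]; exact h1
        have e2 : l < (p.1+1) * (2*L) := by
          calc l < 2*L*p.1 + 2*L := h2
            _ = (p.1+1) * (2*L) := by ring
        have hdiv : l / (2*L) = p.1 := Nat.div_eq_of_lt_le e1 e2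
        have hmfl : ∀ i, ⌊S l i * 2^(j i)⌋₊ = p.2 i := by
          intro i
          have hfac : gInt (j i) (p.2 i) (S l i) ≠ 0 := by
            intro hz
            exact h3 (Finset.prod_eq_zero (Finset.mem_univ i) hz)
          have hmi : p.2 i < 2^(j i) := by
            have := Fintype.mem_piFinset.1 hmem.2 i
            exact Finset.mem_range.1 this
          obtain ⟨hlo, hhi⟩ := gInt_mem (j i) (p.2 i) hmi hfac
          have h2p : (0:ℝ) < 2^(j i) := by positivity
          have hzlo : (p.2 i : ℝ) ≤ S l i * 2^(j i) := by
            rw [div_le_iff₀ h2p] at hlo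
            linarith
          have hzhi : S l i * 2^(j i) < (p.2 i : ℝ) + 1 := by
            rw [lt_div_iff₀ h2p] at hhi
            linarith
          have hz0 : (0:ℝ) ≤ S l i * 2^(j i) := le_trans (by positivity) hzlo
          rw [Nat.floor_eq_iff hz0]
          exact ⟨by exact_mod_cast hzlo, by push_cast; exact hzhi⟩
        ext1
        · exact hdiv
        · funext i
          exact hmfl i
    calc ((Finset.range (2^j0) ×ˢ Dfin0 d j).filter (fun p => ¬ Empt p)).card
        ≤ ((Finset.range (2^μ)).image
            (fun l => (l / (2*L), fun i => ⌊S l i * 2^(j i)⌋₊))).card :=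
          Finset.card_le_card hsub
      _ ≤ (Finset.range (2^μ)).card := Finset.card_image_le
      _ = 2^μ := Finset.card_range _
  have hEmcard : 2^μ ≤ Em.card := by
    have := Finset.card_filter_add_card_filter_not (s := Finset.range (2^j0) ×ˢ Dfin0 d j)
      (p := Empt)
    rw [htotcard] at this
    have h2 : 2^(μ+1) = 2^μ + 2^μ := by rw [pow_succ]; ring
    have h3 : Em.card = (Finset.filter Empt (Finset.range (2^j0) ×ˢ Dfin0 d j)).card := by
      rw [hEm]
    omega
  -- per empty box
  set κ : ℝ := (4:ℝ)⁻¹^(n+d) * (L:ℝ)^2 with hκ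
  have hκpos : 0 < κ := by
    rw [hκ]
    have : (0:ℝ) < (L:ℝ) := by
      rw [hL]
      positivity
    positivity
  have hbox : ∀ p ∈ Em, κ^r ≤ ((2*L : ℕ):ℝ)^(r-1) *
      ∑ k ∈ Finset.Ioc (2*L*p.1) (2*L*p.1 + 2*L), (k:ℝ)^r * |cf p.2 k|^r := by
    intro p hp
    rw [Finset.mem_filter] at hp
    obtain ⟨hmem, hemp⟩ := hp
    rw [Finset.mem_product] at hmem
    have hmi : ∀ i, p.2 i < 2^(j i) := by
      intro i
      exact Finset.mem_range.1 (Fintype.mem_piFinset.1 hmem.2 i)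
    have hkey := key_identity S j p.2 (2*L*p.1) L (fun l hl1 hl2 => hemp l hl1 hl2)
    have habs : κ ≤ ∑ k ∈ Finset.Ioc (2*L*p.1) (2*L*p.1 + 2*L), (k:ℝ) * |cf p.2 k| := by
      have h1 : κ = |(∏ i, pInt (j i) (p.2 i)) * (L:ℝ)^2| := by
        rw [abs_mul, abs_prod_pInt j p.2 hmi, abs_of_nonneg (by positivity : (0:ℝ) ≤ (L:ℝ)^2)]
      rw [h1, ← hkey]
      calc |∑ k ∈ Finset.Ioc (2*L*p.1) (2*L*p.1+2*L), (if k ≤ 2*L*p.1+L then (1:ℝ) else -1)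
              * ((k:ℝ) * cf p.2 k)|
          ≤ ∑ k ∈ Finset.Ioc (2*L*p.1) (2*L*p.1+2*L), |(if k ≤ 2*L*p.1+L then (1:ℝ) else -1)
              * ((k:ℝ) * cf p.2 k)| := Finset.abs_sum_le_sum_abs _ _
        _ = ∑ k ∈ Finset.Ioc (2*L*p.1) (2*L*p.1+2*L), (k:ℝ) * |cf p.2 k| := by
            refine Finset.sum_congr rfl fun k _ => ?_
            rw [abs_mul, abs_mul, Nat.abs_cast]
            split_ifs <;> simp
    calc κ^r ≤ (∑ k ∈ Finset.Ioc (2*L*p.1) (2*L*p.1 + 2*L), (k:ℝ) * |cf p.2 k|)^r := by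
          apply Real.rpow_le_rpow (le_of_lt hκpos) habs (by linarith)
      _ ≤ ((Finset.Ioc (2*L*p.1) (2*L*p.1+2*L)).card : ℝ)^(r-1) *
            ∑ k ∈ Finset.Ioc (2*L*p.1) (2*L*p.1 + 2*L), ((k:ℝ) * |cf p.2 k|)^r :=
          jensen_rpow _ _ (fun k _ => by positivity) hr
      _ = ((2*L : ℕ):ℝ)^(r-1) *
            ∑ k ∈ Finset.Ioc (2*L*p.1) (2*L*p.1 + 2*L), (k:ℝ)^r * |cf p.2 k|^r := by
          rw [Nat.card_Ioc]
          have : 2*L*p.1 + 2*L - 2*L*p.1 = 2*L := by omega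
          rw [this]
          congr 1
          refine Finset.sum_congr rfl fun k _ => ?_
          rw [Real.mul_rpow (Nat.cast_nonneg k) (abs_nonneg _)]
  -- sum over the empty boxes
  have hsum1 : (2^μ : ℝ) * κ^r ≤ ((2*L : ℕ):ℝ)^(r-1) *
      ∑ p ∈ Em, ∑ k ∈ Finset.Ioc (2*L*p.1) (2*L*p.1 + 2*L), (k:ℝ)^r * |cf p.2 k|^r := by
    rw [Finset.mul_sum]
    calc (2^μ : ℝ) * κ^r ≤ (Em.card : ℝ) * κ^r := by
          apply mul_le_mul_of_nonneg_right _ (Real.rpow_nonneg (le_of_lt hκpos) r)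
          exact_mod_cast hEmcard
      _ ≤ ∑ _p ∈ Em, κ^r := by rw [Finset.sum_const, nsmul_eq_mul]
      _ ≤ _ := Finset.sum_le_sum hbox
  have hsum2 : ∑ p ∈ Em, ∑ k ∈ Finset.Ioc (2*L*p.1) (2*L*p.1 + 2*L), (k:ℝ)^r * |cf p.2 k|^r
      ≤ ∑ k ∈ Finset.Ioc (0:ℕ) (2^μ), (k:ℝ)^r * ∑ m ∈ Dfin0 d j, |cf m k|^r := by
    calc ∑ p ∈ Em, ∑ k ∈ Finset.Ioc (2*L*p.1) (2*L*p.1 + 2*L), (k:ℝ)^r * |cf p.2 k|^r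
        ≤ ∑ p ∈ Finset.range (2^j0) ×ˢ Dfin0 d j,
            ∑ k ∈ Finset.Ioc (2*L*p.1) (2*L*p.1 + 2*L), (k:ℝ)^r * |cf p.2 k|^r := by
          apply Finset.sum_le_sum_of_subset_of_nonneg (Finset.filter_subset _ _)
          intro p _ _
          exact Finset.sum_nonneg fun k _ => by positivity
      _ = ∑ m ∈ Dfin0 d j, ∑ m0 ∈ Finset.range (2^j0),
            ∑ k ∈ Finset.Ioc (2*L*m0) (2*L*m0 + 2*L), (k:ℝ)^r * |cf m k|^r := by
          rw [Finset.sum_product_right]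
      _ = ∑ m ∈ Dfin0 d j, ∑ k ∈ Finset.Ioc (0:ℕ) (2^μ), (k:ℝ)^r * |cf m k|^r := by
          refine Finset.sum_congr rfl fun m _ => ?_
          rw [sum_blocks (fun k => (k:ℝ)^r * |cf m k|^r) (2*L) (2^j0),
            show (2*L)*(2^j0) = 2^μ by rw [mul_comm]; exact htot]
      _ = ∑ k ∈ Finset.Ioc (0:ℕ) (2^μ), (k:ℝ)^r * ∑ m ∈ Dfin0 d j, |cf m k|^r := by
          rw [Finset.sum_comm]
          exact Finset.sum_congr rfl fun k _ => by rw [Finset.mul_sum]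
  -- put everything together
  have hmain : (2^μ : ℝ) * κ^r ≤ ((2*L : ℕ):ℝ)^(r-1) *
      ∑ k ∈ Finset.Ioc (0:ℕ) (2^μ), (k:ℝ)^r * ∑ m ∈ Dfin0 d j, |cf m k|^r := by
    refine le_trans hsum1 ?_
    apply mul_le_mul_of_nonneg_left hsum2
    positivity
  have hX : 0 ≤ ∑ k ∈ Finset.Ioc (0:ℕ) (2^μ), (k:ℝ)^r * ∑ m ∈ Dfin0 d j, |cf m k|^r := by
    refine Finset.sum_nonneg fun k _ => mul_nonneg (by positivity) ?_
    exact Finset.sum_nonneg fun m _ => by positivity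
  have hLr : (L:ℝ) = (2:ℝ)^(n-2) := by rw [hL]; push_cast; rfl
  have hκval : κ = (4:ℝ)⁻¹^(d+2) := by
    rw [hκ, hLr, ← pow_mul]
    have h1 : (2:ℝ)^((n-2)*2) = (4:ℝ)^(n-2) := by
      rw [show (4:ℝ) = 2^2 by norm_num, ← pow_mul, mul_comm]
    have h4 : (4:ℝ)^(n-2) * 4^(d+2) = 4^(n+d) := by rw [← pow_add]; congr 1; omega
    rw [h1, inv_pow, inv_pow]
    rw [inv_mul_eq_div, div_eq_iff (by positivity : ((4:ℝ)^(n+d)) ≠ 0)]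
    field_simp
    linarith [h4]
  have h2L : ((2*L:ℕ):ℝ) ≤ (2:ℝ)^n := by
    push_cast [hL]
    calc (2:ℝ) * 2^(n-2) ≤ 2 * (2 * 2^(n-2)) := by nlinarith [pow_pos (by norm_num : (0:ℝ) < 2) (n-2)]
      _ = 2^(n-2+2) := by rw [pow_add]; ring
      _ = 2^n := by congr 1; omega
  have hmono : ((2*L:ℕ):ℝ)^(r-1) ≤ ((2:ℝ)^n)^(r-1) :=
    Real.rpow_le_rpow (by positivity) h2L (by linarith)
  calc ((4:ℝ)⁻¹^(d+2))^r * 2^μ = (2^μ:ℝ) * κ^r := by rw [hκval]; ring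
    _ ≤ ((2*L:ℕ):ℝ)^(r-1) *
        ∑ k ∈ Finset.Ioc (0:ℕ) (2^μ), (k:ℝ)^r * ∑ m ∈ Dfin0 d j, |cf m k|^r := hmain
    _ ≤ ((2:ℝ)^n)^(r-1) *
        ∑ k ∈ Finset.Ioc (0:ℕ) (2^μ), (k:ℝ)^r * ∑ m ∈ Dfin0 d j, |cf m k|^r :=
      mul_le_mul_of_nonneg_right hmono hX

end PerJ
section TailBound

open MeasureTheory

lemma tail_bound {d : ℕ} (S : ℕ → Fin d → ℝ) {r : ℝ} (hr : 1 ≤ r) (j : Fin d → ℕ) (k : ℕ) :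
    ((2:ℝ)^(∑ i, j i)) ^ (r-1) *
      ∑ m ∈ Dfin0 d j, |haarCoeff d (discSeq d S k) (fun i => (j i:ℤ)) m| ^ r
    ≤ ((k:ℝ) * (2:ℝ)^r + 1) * ((2:ℝ)⁻¹)^(∑ i, j i) := by
  classical
  set n := ∑ i, j i with hn
  set t : ℝ := (2:ℝ)^n with ht
  have htpos : (0:ℝ) < t := by positivity
  have ht1 : (1:ℝ) ≤ t := one_le_pow₀ (by norm_num)
  set u : ℝ := t ^ r with hu
  have hupos : (0:ℝ) < u := Real.rpow_pos_of_pos htpos r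
  have hu1 : (1:ℝ) ≤ u := by
    have := Real.rpow_le_rpow_of_exponent_le ht1 (by linarith : (0:ℝ) ≤ r)
    rwa [Real.rpow_zero] at this
  have htu : t ≤ u := by
    have := Real.rpow_le_rpow_of_exponent_le ht1 hr
    rwa [Real.rpow_one] at this
  set cf : (Fin d → ℕ) → ℝ :=
    fun m => haarCoeff d (discSeq d S k) (fun i => (j i:ℤ)) m with hcf
  -- bounds on coefficients
  have hPabs : ∀ m ∈ Dfin0 d j, |∏ i, pInt (j i) (m i)| ≤ t⁻¹ * t⁻¹ := by
    intro m hm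
    have hmi : ∀ i, m i < 2^(j i) := fun i =>
      Finset.mem_range.1 (Fintype.mem_piFinset.1 hm i)
    rw [abs_prod_pInt j m hmi]
    have h1 : ((4:ℝ)⁻¹)^(n+d) ≤ ((4:ℝ)⁻¹)^n :=
      pow_le_pow_of_le_one (by norm_num) (by norm_num) (by omega)
    have h2 : ((4:ℝ)⁻¹)^n = t⁻¹ * t⁻¹ := by
      rw [ht, ← inv_pow, show (4:ℝ)⁻¹ = 2⁻¹ * 2⁻¹ by norm_num, mul_pow, inv_pow]
    rw [← h2]
    exact h1
  have hαabs : ∀ l : ℕ, ∀ m ∈ Dfin0 d j, |∏ i, gInt (j i) (m i) (S l i)| ≤ t⁻¹ := by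
    intro l m hm
    have hmi : ∀ i, m i < 2^(j i) := fun i =>
      Finset.mem_range.1 (Fintype.mem_piFinset.1 hm i)
    rw [Finset.abs_prod]
    calc ∏ i, |gInt (j i) (m i) (S l i)| ≤ ∏ i, ((2:ℝ)⁻¹)^(j i) :=
          Finset.prod_le_prod (fun i _ => abs_nonneg _)
            (fun i _ => abs_gInt_le (j i) (m i) (hmi i) (S l i))
      _ = t⁻¹ := by rw [Finset.prod_pow_eq_pow_sum, ht, ← hn, inv_pow]
  set Occ := (Dfin0 d j).filter
    (fun m => ∃ l, l < k ∧ ∀ i, gInt (j i) (m i) (S l i) ≠ 0) with hOcc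
  have hOccCard : Occ.card ≤ k := by
    have hsub : Occ ⊆ (Finset.range k).image
        (fun l => fun i => ⌊S l i * 2^(j i)⌋₊) := by
      intro m hm
      rw [hOcc, Finset.mem_filter] at hm
      obtain ⟨hmem, l, hlk, hlg⟩ := hm
      rw [Finset.mem_image]
      refine ⟨l, Finset.mem_range.2 hlk, ?_⟩
      funext i
      have hmi : m i < 2^(j i) := Finset.mem_range.1 (Fintype.mem_piFinset.1 hmem i)
      obtain ⟨hlo, hhi⟩ := gInt_mem (j i) (m i) hmi (hlg i)
      have h2p : (0:ℝ) < 2^(j i) := by positivity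
      have hzlo : (m i : ℝ) ≤ S l i * 2^(j i) := by
        rw [div_le_iff₀ h2p] at hlo; linarith
      have hzhi : S l i * 2^(j i) < (m i : ℝ) + 1 := by
        rw [lt_div_iff₀ h2p] at hhi; linarith
      have hz0 : (0:ℝ) ≤ S l i * 2^(j i) := le_trans (by positivity) hzlo
      rw [Nat.floor_eq_iff hz0]
      exact ⟨by exact_mod_cast hzlo, by push_cast; exact hzhi⟩
    calc Occ.card ≤ _ := Finset.card_le_card hsub
      _ ≤ (Finset.range k).card := Finset.card_image_le
      _ = k := Finset.card_range k
  have hbd1 : ∀ m ∈ Occ, |cf m| ≤ 2 * t⁻¹ := by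
    intro m hm
    have hmem : m ∈ Dfin0 d j := Finset.mem_of_mem_filter m hm
    simp only [hcf]
    rw [haarCoeff_discSeq S j m k]
    have htinv : t⁻¹ * t⁻¹ ≤ t⁻¹ := by
      have h0 : (0:ℝ) ≤ t⁻¹ := by positivity
      have h1 : t * t⁻¹ = 1 := mul_inv_cancel₀ (ne_of_gt htpos)
      nlinarith [mul_nonneg h0 h0]
    calc |(∑ l ∈ Finset.range k, ∏ i, gInt (j i) (m i) (S l i)) / k - ∏ i, pInt (j i) (m i)|
        ≤ |(∑ l ∈ Finset.range k, ∏ i, gInt (j i) (m i) (S l i)) / k|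
          + |∏ i, pInt (j i) (m i)| := abs_sub _ _
      _ ≤ t⁻¹ + t⁻¹ := by
          refine add_le_add ?_ (le_trans (hPabs m hmem) htinv)
          rw [abs_div, Nat.abs_cast]
          rcases Nat.eq_zero_or_pos k with hk0 | hk0
          · simp [hk0]
            positivity
          · rw [div_le_iff₀ (by exact_mod_cast hk0 : (0:ℝ) < (k:ℝ))]
            calc |∑ l ∈ Finset.range k, ∏ i, gInt (j i) (m i) (S l i)|
                ≤ ∑ l ∈ Finset.range k, |∏ i, gInt (j i) (m i) (S l i)| :=
                  Finset.abs_sum_le_sum_abs _ _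
              _ ≤ ∑ _l ∈ Finset.range k, t⁻¹ :=
                  Finset.sum_le_sum (fun l _ => hαabs l m hmem)
              _ = t⁻¹ * k := by rw [Finset.sum_const, Finset.card_range, nsmul_eq_mul]; ring
      _ = 2 * t⁻¹ := by ring
  have hbd2 : ∀ m ∈ Dfin0 d j, m ∉ Occ → |cf m| ≤ t⁻¹ * t⁻¹ := by
    intro m hmem hm
    have hz : ∀ l ∈ Finset.range k, ∏ i, gInt (j i) (m i) (S l i) = 0 := by
      intro l hl
      by_contra hne
      refine hm ?_
      rw [hOcc, Finset.mem_filter]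
      refine ⟨hmem, l, Finset.mem_range.1 hl, fun i hgz => hne ?_⟩
      exact Finset.prod_eq_zero (Finset.mem_univ i) hgz
    simp only [hcf]
    rw [haarCoeff_discSeq S j m k, Finset.sum_congr rfl hz]
    simp only [Finset.sum_const_zero, zero_div, zero_sub, abs_neg]
    exact hPabs m hmem
  -- sum the two contributions
  have hsplit : ∑ m ∈ Dfin0 d j, |cf m| ^ r
      ≤ (k:ℝ) * (2 * t⁻¹)^r + t * (t⁻¹ * t⁻¹)^r := by
    rw [← Finset.sum_filter_add_sum_filter_not (Dfin0 d j)
      (fun m => ∃ l, l < k ∧ ∀ i, gInt (j i) (m i) (S l i) ≠ 0)]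
    refine add_le_add ?_ ?_
    · calc ∑ m ∈ Occ, |cf m| ^ r ≤ ∑ _m ∈ Occ, (2 * t⁻¹)^r :=
            Finset.sum_le_sum (fun m hm =>
              Real.rpow_le_rpow (abs_nonneg _) (hbd1 m hm) (by linarith))
        _ = (Occ.card : ℝ) * (2 * t⁻¹)^r := by rw [Finset.sum_const, nsmul_eq_mul]
        _ ≤ (k:ℝ) * (2 * t⁻¹)^r := by
            apply mul_le_mul_of_nonneg_right _ (Real.rpow_nonneg (by positivity) r)
            exact_mod_cast hOccCard
    · calc ∑ m ∈ (Dfin0 d j).filter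
              (fun m => ¬ ∃ l, l < k ∧ ∀ i, gInt (j i) (m i) (S l i) ≠ 0), |cf m| ^ r
          ≤ ∑ _m ∈ (Dfin0 d j).filter
              (fun m => ¬ ∃ l, l < k ∧ ∀ i, gInt (j i) (m i) (S l i) ≠ 0), (t⁻¹ * t⁻¹)^r := by
            refine Finset.sum_le_sum (fun m hm => ?_)
            rw [Finset.mem_filter] at hm
            refine Real.rpow_le_rpow (abs_nonneg _) ?_ (by linarith)
            refine hbd2 m hm.1 ?_
            rw [hOcc, Finset.mem_filter]
            intro hcon
            exact hm.2 hcon.2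
        _ = (((Dfin0 d j).filter
              (fun m => ¬ ∃ l, l < k ∧ ∀ i, gInt (j i) (m i) (S l i) ≠ 0)).card : ℝ)
              * (t⁻¹ * t⁻¹)^r := by rw [Finset.sum_const, nsmul_eq_mul]
        _ ≤ t * (t⁻¹ * t⁻¹)^r := by
            apply mul_le_mul_of_nonneg_right _ (Real.rpow_nonneg (by positivity) r)
            have hc : ((Dfin0 d j).filter
                (fun m => ¬ ∃ l, l < k ∧ ∀ i, gInt (j i) (m i) (S l i) ≠ 0)).card
                ≤ (Dfin0 d j).card := Finset.card_filter_le _ _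
            have hDcard : (Dfin0 d j).card = 2^n := by
              rw [Dfin0, Fintype.card_piFinset]
              simp only [Finset.card_range]
              rw [Finset.prod_pow_eq_pow_sum]
            rw [ht]
            calc (((Dfin0 d j).filter
                (fun m => ¬ ∃ l, l < k ∧ ∀ i, gInt (j i) (m i) (S l i) ≠ 0)).card : ℝ)
                ≤ ((Dfin0 d j).card : ℝ) := by exact_mod_cast hc
              _ = (2:ℝ)^n := by rw [hDcard]; push_cast; ring
    -- done split
  -- final algebra
  have hfin : t^(r-1) * ((k:ℝ) * (2 * t⁻¹)^r + t * (t⁻¹ * t⁻¹)^r)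
      ≤ ((k:ℝ) * (2:ℝ)^r + 1) * t⁻¹ := by
    have e1 : (2 * t⁻¹)^r = (2:ℝ)^r * u⁻¹ := by
      rw [Real.mul_rpow (by norm_num) (by positivity), Real.inv_rpow (le_of_lt htpos), hu]
    have e2 : (t⁻¹ * t⁻¹)^r = u⁻¹ * u⁻¹ := by
      rw [Real.mul_rpow (by positivity) (by positivity),
        Real.inv_rpow (le_of_lt htpos), hu]
    have e3 : t^(r-1) = u * t⁻¹ := by
      rw [Real.rpow_sub htpos, Real.rpow_one, hu, div_eq_mul_inv]
    rw [e1, e2, e3]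
    have hune : u ≠ 0 := ne_of_gt hupos
    have htne : t ≠ 0 := ne_of_gt htpos
    have expand : u * t⁻¹ * ((k:ℝ) * ((2:ℝ)^r * u⁻¹) + t * (u⁻¹ * u⁻¹))
        = (k:ℝ) * (2:ℝ)^r * t⁻¹ + t * u⁻¹ * t⁻¹ := by
      field_simp
    rw [expand]
    have hterm : t * u⁻¹ ≤ 1 := by
      rw [← div_eq_mul_inv, div_le_one hupos]
      exact htu
    have ht0 : (0:ℝ) ≤ t⁻¹ := by positivity
    calc (k:ℝ) * (2:ℝ)^r * t⁻¹ + t * u⁻¹ * t⁻¹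
        ≤ (k:ℝ) * (2:ℝ)^r * t⁻¹ + 1 * t⁻¹ := by
          refine add_le_add (le_refl _) (mul_le_mul_of_nonneg_right hterm ht0)
      _ = ((k:ℝ) * (2:ℝ)^r + 1) * t⁻¹ := by ring
  calc ((2:ℝ)^n) ^ (r-1) * ∑ m ∈ Dfin0 d j, |cf m| ^ r
      ≤ t^(r-1) * ((k:ℝ) * (2 * t⁻¹)^r + t * (t⁻¹ * t⁻¹)^r) := by
        rw [← ht]
        exact mul_le_mul_of_nonneg_left hsplit (Real.rpow_nonneg (le_of_lt htpos) _)
    _ ≤ ((k:ℝ) * (2:ℝ)^r + 1) * t⁻¹ := hfin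
    _ = ((k:ℝ) * (2:ℝ)^r + 1) * ((2:ℝ)⁻¹)^n := by rw [ht, inv_pow]

end TailBound
section BesovLower

open MeasureTheory

lemma holder_step {p r : ℝ} (hr1 : 1 ≤ r) (hrp : r ≤ p) {ι : Type*} (s : Finset ι) (c : ι → ℝ) :
    ∑ m ∈ s, |c m|^r ≤ ((s.card:ℝ))^(1 - r/p) * (∑ m ∈ s, |c m|^p)^(r/p) := by
  have hp0 : (0:ℝ) < p := by linarith
  have hr0 : (0:ℝ) < r := by linarith
  have hθ : 1 ≤ p/r := (one_le_div hr0).2 hrp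
  have key := jensen_rpow s (fun m => |c m|^r)
    (fun m _ => Real.rpow_nonneg (abs_nonneg _) r) hθ
  have e1 : ∀ m : ι, ((|c m|^r : ℝ))^(p/r) = |c m|^p := by
    intro m
    rw [← Real.rpow_mul (abs_nonneg _), mul_div_cancel₀ _ (ne_of_gt hr0)]
  simp only [e1] at key
  -- key : (∑ |c|^r)^(p/r) ≤ card^(p/r - 1) * ∑ |c|^p
  have hA : (0:ℝ) ≤ ∑ m ∈ s, |c m|^r :=
    Finset.sum_nonneg fun m _ => Real.rpow_nonneg (abs_nonneg _) r
  have hsp : (0:ℝ) ≤ ∑ m ∈ s, |c m|^p :=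
    Finset.sum_nonneg fun m _ => Real.rpow_nonneg (abs_nonneg _) p
  have key2 := Real.rpow_le_rpow (Real.rpow_nonneg hA _) key
    (le_of_lt (div_pos hr0 hp0))
  rw [← Real.rpow_mul hA] at key2
  have hone : (p/r) * (r/p) = 1 := by field_simp
  rw [hone, Real.rpow_one] at key2
  rw [Real.mul_rpow (Real.rpow_nonneg (Nat.cast_nonneg _) _) hsp,
    ← Real.rpow_mul (Nat.cast_nonneg _)] at key2
  have hexp : (p/r - 1) * (r/p) = 1 - r/p := by field_simp
  rwa [hexp] at key2

lemma besov_term_ge {p q r : ℝ} (hr1 : 1 ≤ r) (hrp : r ≤ p) (hrq : r ≤ q) (hq1 : 1 ≤ q)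
    {d : ℕ} (j : Fin d → ℕ) (c : (Fin d → ℕ) → ℝ) :
    (((2:ℝ)^(∑ i, j i))^(r-1) * ∑ m ∈ Dfin0 d j, |c m|^r)^(q/r)
      ≤ (2:ℝ)^((((∑ i, j i) : ℕ):ℝ)*(0 - 1/p + 1)*q)
          * (∑ m ∈ Dfin0 d j, |c m|^p)^(q/p) := by
  have hp0 : (0:ℝ) < p := by linarith
  have hr0 : (0:ℝ) < r := by linarith
  have hq0 : (0:ℝ) < q := by linarith
  set n := ∑ i, j i with hn
  set t : ℝ := (2:ℝ)^n with ht
  have htpos : (0:ℝ) < t := by positivity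
  have hcard : ((Dfin0 d j).card : ℝ) = t := by
    have : (Dfin0 d j).card = 2^n := by
      rw [Dfin0, Fintype.card_piFinset]
      simp only [Finset.card_range]
      rw [Finset.prod_pow_eq_pow_sum]
    rw [this, ht]
    push_cast
    ring
  have hsr : (0:ℝ) ≤ ∑ m ∈ Dfin0 d j, |c m|^r :=
    Finset.sum_nonneg fun m _ => Real.rpow_nonneg (abs_nonneg _) r
  have hsp : (0:ℝ) ≤ ∑ m ∈ Dfin0 d j, |c m|^p :=
    Finset.sum_nonneg fun m _ => Real.rpow_nonneg (abs_nonneg _) p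
  have step1 : t^(r-1) * ∑ m ∈ Dfin0 d j, |c m|^r
      ≤ t^(r-1) * (t^(1-r/p) * (∑ m ∈ Dfin0 d j, |c m|^p)^(r/p)) := by
    refine mul_le_mul_of_nonneg_left ?_ (Real.rpow_nonneg (le_of_lt htpos) _)
    have := holder_step hr1 hrp (Dfin0 d j) c
    rwa [hcard] at this
  have step2 : t^(r-1) * (t^(1-r/p) * (∑ m ∈ Dfin0 d j, |c m|^p)^(r/p))
      = t^(r - r/p) * (∑ m ∈ Dfin0 d j, |c m|^p)^(r/p) := by
    rw [← mul_assoc, ← Real.rpow_add htpos]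
    congr 2
    ring
  have hLHS0 : (0:ℝ) ≤ t^(r-1) * ∑ m ∈ Dfin0 d j, |c m|^r :=
    mul_nonneg (Real.rpow_nonneg (le_of_lt htpos) _) hsr
  have key := Real.rpow_le_rpow hLHS0 (step1.trans (le_of_eq step2))
    (le_of_lt (div_pos hq0 hr0))
  rw [Real.mul_rpow (Real.rpow_nonneg (le_of_lt htpos) _)
      (Real.rpow_nonneg hsp _), ← Real.rpow_mul (le_of_lt htpos),
    ← Real.rpow_mul hsp] at key
  have he1 : (r - r/p) * (q/r) = (0 - 1/p + 1)*q := by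
    field_simp
    ring
  have he2 : (r/p) * (q/r) = q/p := by
    field_simp
  rw [he1, he2] at key
  have hw : t^((0 - 1/p + 1)*q) = (2:ℝ)^(((n:ℕ):ℝ)*(0 - 1/p + 1)*q) := by
    rw [ht, ← Real.rpow_natCast 2 n, ← Real.rpow_mul (by norm_num : (0:ℝ) ≤ 2), mul_assoc]
  rw [hw] at key
  calc (t^(r-1) * ∑ m ∈ Dfin0 d j, |c m|^r)^(q/r)
      ≤ (2:ℝ)^(((n:ℕ):ℝ)*(0 - 1/p + 1)*q) * (∑ m ∈ Dfin0 d j, |c m|^p)^(q/p) := key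

lemma besovSum_ge_subsum {d : ℕ} (p q : ℝ) (f : (Fin d → ℝ) → ℝ)
    (Cube : Finset (Fin d → ℕ)) :
    ENNReal.ofReal (∑ j ∈ Cube, (2:ℝ)^((((∑ i, j i) : ℕ):ℝ)*(0 - 1/p + 1)*q)
        * (∑ m ∈ Dfin0 d j, |haarCoeff d f (fun i => (j i:ℤ)) m|^p)^(q/p))
      ≤ besovSum d p q 0 f := by
  classical
  have hmem : ∀ j : Fin d → ℕ, (fun i => (j i : ℤ)) ∈ validJ d := by
    intro j i
    exact le_trans (by norm_num : (-1:ℤ) ≤ 0) (Int.natCast_nonneg _)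
  set emb : (Fin d → ℕ) → validJ d := fun j => ⟨fun i => (j i : ℤ), hmem j⟩ with hemb
  have hinj : Function.Injective emb := by
    intro a b hab
    funext i
    have h1 := congrFun (congrArg Subtype.val hab) i
    simp only [hemb] at h1
    exact_mod_cast h1
  have hterm : ∀ j : Fin d → ℕ,
      ENNReal.ofReal ((2:ℝ)^((((∑ i, j i) : ℕ):ℝ)*(0 - 1/p + 1)*q)
        * (∑ m ∈ Dfin0 d j, |haarCoeff d f (fun i => (j i:ℤ)) m|^p)^(q/p))
      = ENNReal.ofReal ((2:ℝ) ^ ((jnorm d (emb j).1 : ℝ) * (0 - 1/p + 1) * q) *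
          (∑ m ∈ Dfin d (emb j).1, |haarCoeff d f (emb j).1 m| ^ p) ^ (q / p)) := by
    intro j
    have h1 : jnorm d (emb j).1 = ∑ i, j i := by
      rw [hemb, jnorm]
      simp [Int.toNat_natCast]
    have h2 : Dfin d (emb j).1 = Dfin0 d j := by
      rw [hemb, Dfin, Dfin0]
      simp [Int.toNat_natCast]
    rw [h1, h2]
  calc ENNReal.ofReal (∑ j ∈ Cube, (2:ℝ)^((((∑ i, j i) : ℕ):ℝ)*(0 - 1/p + 1)*q)
        * (∑ m ∈ Dfin0 d j, |haarCoeff d f (fun i => (j i:ℤ)) m|^p)^(q/p))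
      = ∑ j ∈ Cube, ENNReal.ofReal ((2:ℝ)^((((∑ i, j i) : ℕ):ℝ)*(0 - 1/p + 1)*q)
        * (∑ m ∈ Dfin0 d j, |haarCoeff d f (fun i => (j i:ℤ)) m|^p)^(q/p)) := by
        rw [ENNReal.ofReal_sum_of_nonneg]
        intro j _
        apply mul_nonneg (Real.rpow_nonneg (by norm_num) _)
        apply Real.rpow_nonneg
        exact Finset.sum_nonneg fun m _ => Real.rpow_nonneg (abs_nonneg _) p
    _ = ∑ x ∈ Cube.image emb, ENNReal.ofReal ((2:ℝ) ^ ((jnorm d x.1 : ℝ) * (0 - 1/p + 1) * q) *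
          (∑ m ∈ Dfin d x.1, |haarCoeff d f x.1 m| ^ p) ^ (q / p)) := by
        rw [Finset.sum_image (fun a _ b _ hab => hinj hab)]
        exact Finset.sum_congr rfl fun j _ => hterm j
    _ ≤ besovSum d p q 0 f := by
        rw [besovSum]
        exact ENNReal.sum_le_tsum _

lemma geom_tail (L : ℕ) : (∑ t ∈ Finset.Icc 2 L, ((2:ℝ)⁻¹)^t) + ((2:ℝ)⁻¹)^L ≤ 1 := by
  induction L with
  | zero => simp
  | succ L ih =>
    rcases Nat.lt_or_ge L 1 with h | h
    · interval_cases L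
      · norm_num
    · have hins : Finset.Icc 2 (L+1) = insert (L+1) (Finset.Icc 2 L) := by
        ext x
        simp only [Finset.mem_Icc, Finset.mem_insert]
        omega
      have hnotmem : L+1 ∉ Finset.Icc 2 L := by
        simp only [Finset.mem_Icc]
        omega
      rw [hins, Finset.sum_insert hnotmem]
      have hpow : ((2:ℝ)⁻¹)^(L+1) + ((2:ℝ)⁻¹)^(L+1) = ((2:ℝ)⁻¹)^L := by
        rw [pow_succ]
        ring
      linarith

lemma geom_cube {d : ℕ} (L0 : ℕ) :
    ∑ j ∈ Fintype.piFinset (fun _ : Fin d => Finset.Icc 2 L0), ((2:ℝ)⁻¹)^(∑ i, j i) ≤ 1 := by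
  have hfac : ∀ j : Fin d → ℕ, ((2:ℝ)⁻¹)^(∑ i, j i) = ∏ i, ((2:ℝ)⁻¹)^(j i) := by
    intro j
    rw [Finset.prod_pow_eq_pow_sum]
  calc ∑ j ∈ Fintype.piFinset (fun _ : Fin d => Finset.Icc 2 L0), ((2:ℝ)⁻¹)^(∑ i, j i)
      = ∑ j ∈ Fintype.piFinset (fun _ : Fin d => Finset.Icc 2 L0), ∏ i, ((2:ℝ)⁻¹)^(j i) :=
        Finset.sum_congr rfl fun j _ => hfac j
    _ = ∏ _i : Fin d, ∑ t ∈ Finset.Icc 2 L0, ((2:ℝ)⁻¹)^t :=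
        (Finset.prod_univ_sum _ _).symm
    _ ≤ 1 := by
        apply Finset.prod_le_one
        · intro i _
          exact Finset.sum_nonneg fun t _ => by positivity
        · intro i _
          have := geom_tail L0
          have hp : (0:ℝ) ≤ ((2:ℝ)⁻¹)^L0 := by positivity
          linarith

end BesovLower
section FinalAux

lemma rpow_base_anti {x y z : ℝ} (hx : 0 < x) (hxy : x ≤ y) (hz : z ≤ 0) : y^z ≤ x^z := by
  have hy : (0:ℝ) < y := lt_of_lt_of_le hx hxy
  have h1 : x^(-z) ≤ y^(-z) := Real.rpow_le_rpow (le_of_lt hx) hxy (by linarith)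
  have h2 : (0:ℝ) < x^(-z) := Real.rpow_pos_of_pos hx _
  have h3 := inv_anti₀ h2 h1
  rwa [← Real.rpow_neg (le_of_lt hx), ← Real.rpow_neg (le_of_lt hy), neg_neg] at h3

end FinalAux
set_option maxHeartbeats 2000000 in
/-- Besov `S⁰_{p,q}B` lower bound for sequences: there is `c > 0` such that
for every infinite sequence `S` in `[0,1)^d`, the `S⁰_{p,q}B`-norm of `D_S^N` is at least
`c · N⁻¹ (log N)^{d/q}` for infinitely many `N`. -/
theorem besov_s0_lower_bound (d : ℕ) (hd : 0 < d) (p q : ℝ) (hp : 1 ≤ p) (hq : 1 ≤ q) :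
    ∃ c : ℝ, 0 < c ∧ ∀ S : ℕ → Fin d → ℝ, (∀ k, S k ∈ unitCubeIco d) →
      {N : ℕ | ENNReal.ofReal (c * (N:ℝ)⁻¹ * Real.log N ^ ((d:ℝ)/q)) ≤
        (besovSum d p q 0 (discSeq d S N)) ^ (1/q)}.Infinite := by
  classical
  set r := min p q with hrdef
  have hr1 : 1 ≤ r := le_min hp hq
  have hrp : r ≤ p := min_le_left _ _
  have hrq : r ≤ q := min_le_right _ _
  have hr0 : (0:ℝ) < r := by linarith
  have hq0 : (0:ℝ) < q := by linarith
  have hdR : (0:ℝ) < (d:ℝ) := by exact_mod_cast hd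
  set c₀ : ℝ := (((4:ℝ)⁻¹)^(d+2))^r with hc₀
  have hc₀pos : 0 < c₀ := Real.rpow_pos_of_pos (by positivity) r
  set A : ℝ := (c₀/2) * (((2*(d:ℝ))^d)⁻¹) with hA
  have hApos : 0 < A := by positivity
  set c₂ : ℝ := A^(q/r) with hc₂
  have hc₂pos : 0 < c₂ := Real.rpow_pos_of_pos hApos _
  refine ⟨c₂^(1/q), Real.rpow_pos_of_pos hc₂pos _, ?_⟩
  set c : ℝ := c₂^(1/q) with hc
  have hcpos : 0 < c := Real.rpow_pos_of_pos hc₂pos _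
  intro S hS
  apply Set.infinite_of_not_bddAbove
  rintro ⟨K, hK⟩
  -- the constant from the tail estimate
  set CK : ℝ := ∑ k ∈ Finset.Ioc (0:ℕ) K, (k:ℝ)^r * ((k:ℝ)*(2:ℝ)^r + 1) with hCK
  obtain ⟨W₀, hW₀⟩ := pow_unbounded_of_one_lt ((CK+1)*2/c₀) (by norm_num : (1:ℝ) < 2)
  set W : ℕ := max 5 (max (K+1) (W₀+1)) with hW
  have hW5 : 5 ≤ W := le_max_left _ _
  have hWK : K + 1 ≤ W := le_trans (le_max_left _ _) (le_max_right _ _)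
  have hWW0 : W₀ + 1 ≤ W := le_trans (le_max_right _ _) (le_max_right _ _)
  set μ : ℕ := d * W - 1 with hμ
  have hμ1 : d * W = μ + 1 := by
    have : 1 ≤ d * W := by
      calc 1 ≤ 1 * 5 := by norm_num
        _ ≤ d * W := Nat.mul_le_mul hd hW5
    omega
  have hμ4d : 4 * d ≤ μ := by
    have h5 : d * 5 ≤ d * W := Nat.mul_le_mul_left d hW5
    omega
  have hμW : W - 1 ≤ μ := by
    have : 1 * W ≤ d * W := Nat.mul_le_mul_right W hd
    omega
  have hμK : K < 2^μ := by
    calc K < 2^K := Nat.lt_two_pow_self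
      _ ≤ 2^μ := Nat.pow_le_pow_right (by norm_num) (by omega)
  have hμCK : CK + 1 ≤ (2:ℝ)^μ * (c₀/2) := by
    have h1 : ((CK+1)*2/c₀ : ℝ) < 2^W₀ := hW₀
    have h2 : (2:ℝ)^W₀ ≤ (2:ℝ)^μ := by
      apply pow_le_pow_right₀ (by norm_num)
      omega
    rw [div_lt_iff₀ hc₀pos] at h1
    nlinarith
  set M : ℕ := 2^μ with hM
  set Cube : Finset (Fin d → ℕ) := Fintype.piFinset (fun _ : Fin d => Finset.Icc 2 W) with hCube
  have hCubeMem : ∀ j ∈ Cube, (∀ i, 2 ≤ j i ∧ j i ≤ W) := by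
    intro j hj i
    have := Fintype.mem_piFinset.1 hj i
    exact Finset.mem_Icc.1 this
  have hCuben : ∀ j ∈ Cube, 2 ≤ ∑ i, j i ∧ ∑ i, j i ≤ μ + 1 := by
    intro j hj
    constructor
    · calc 2 = 1 * 2 := by norm_num
        _ ≤ d * 2 := Nat.mul_le_mul_right 2 hd
        _ = ∑ _i : Fin d, 2 := by rw [Finset.sum_const, Finset.card_univ, Fintype.card_fin,
              smul_eq_mul]
        _ ≤ ∑ i, j i := Finset.sum_le_sum (fun i _ => (hCubeMem j hj i).1)
    · calc ∑ i, j i ≤ ∑ _i : Fin d, W := Finset.sum_le_sum (fun i _ => (hCubeMem j hj i).2)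
        _ = d * W := by rw [Finset.sum_const, Finset.card_univ, Fintype.card_fin, smul_eq_mul]
        _ = μ + 1 := hμ1
  have hCubeCard : Cube.card = (W-1)^d := by
    rw [hCube, Fintype.card_piFinset]
    simp only [Nat.card_Icc]
    rw [Finset.prod_const, Finset.card_univ, Fintype.card_fin]
    have h12 : W + 1 - 2 = W - 1 := by omega
    rw [h12]
  -- the weighted coefficient sums
  set Rk : ℕ → ℝ := fun k => ∑ j ∈ Cube, ((2:ℝ)^(∑ i, j i))^(r-1) *
    ∑ m ∈ Dfin0 d j, |haarCoeff d (discSeq d S k) (fun i => (j i:ℤ)) m|^r with hRk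
  have hRknonneg : ∀ k, 0 ≤ Rk k := by
    intro k
    refine Finset.sum_nonneg fun j _ => mul_nonneg (Real.rpow_nonneg (by positivity) _) ?_
    exact Finset.sum_nonneg fun m _ => Real.rpow_nonneg (abs_nonneg _) r
  -- lower bound on the total
  have hTotal : (Cube.card : ℝ) * (c₀ * 2^μ) ≤ ∑ k ∈ Finset.Ioc (0:ℕ) M, (k:ℝ)^r * Rk k := by
    have perj : ∀ j ∈ Cube, c₀ * 2^μ ≤ ((2:ℝ)^(∑ i, j i))^(r-1) *
        ∑ k ∈ Finset.Ioc (0:ℕ) (2^μ), (k:ℝ)^r *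
          ∑ m ∈ Dfin0 d j, |haarCoeff d (discSeq d S k) (fun i => (j i:ℤ)) m|^r := by
      intro j hj
      exact per_j_bound S hr1 μ j (hCuben j hj).1 (hCuben j hj).2
    calc (Cube.card : ℝ) * (c₀ * 2^μ) = ∑ _j ∈ Cube, c₀ * 2^μ := by
          rw [Finset.sum_const, nsmul_eq_mul]
      _ ≤ ∑ j ∈ Cube, ((2:ℝ)^(∑ i, j i))^(r-1) *
            ∑ k ∈ Finset.Ioc (0:ℕ) (2^μ), (k:ℝ)^r *
              ∑ m ∈ Dfin0 d j, |haarCoeff d (discSeq d S k) (fun i => (j i:ℤ)) m|^r :=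
          Finset.sum_le_sum perj
      _ = ∑ j ∈ Cube, ∑ k ∈ Finset.Ioc (0:ℕ) M, (k:ℝ)^r * (((2:ℝ)^(∑ i, j i))^(r-1) *
            ∑ m ∈ Dfin0 d j, |haarCoeff d (discSeq d S k) (fun i => (j i:ℤ)) m|^r) := by
          refine Finset.sum_congr rfl fun j _ => ?_
          rw [Finset.mul_sum]
          exact Finset.sum_congr rfl fun k _ => by ring
      _ = ∑ k ∈ Finset.Ioc (0:ℕ) M, (k:ℝ)^r * Rk k := by
          rw [Finset.sum_comm]
          refine Finset.sum_congr rfl fun k _ => ?_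
          rw [hRk, Finset.mul_sum]
  -- tail estimate
  have hTail : ∀ k : ℕ, Rk k ≤ (k:ℝ)*(2:ℝ)^r + 1 := by
    intro k
    calc Rk k ≤ ∑ j ∈ Cube, ((k:ℝ)*(2:ℝ)^r + 1) * ((2:ℝ)⁻¹)^(∑ i, j i) :=
          Finset.sum_le_sum (fun j _ => tail_bound S hr1 j k)
      _ = ((k:ℝ)*(2:ℝ)^r + 1) * ∑ j ∈ Cube, ((2:ℝ)⁻¹)^(∑ i, j i) := by
          rw [Finset.mul_sum]
      _ ≤ ((k:ℝ)*(2:ℝ)^r + 1) * 1 := by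
          refine mul_le_mul_of_nonneg_left ?_ (by positivity)
          exact geom_cube W
      _ = (k:ℝ)*(2:ℝ)^r + 1 := by ring
  -- cube cardinality lower bound
  set X : ℝ := ((μ:ℕ):ℝ)^d with hX
  have hμpos : 1 ≤ μ := by omega
  have hXpos : (0:ℝ) < X := by
    rw [hX]
    have : (0:ℝ) < (μ:ℝ) := by exact_mod_cast hμpos
    positivity
  set ρ : ℝ := ((μ:ℝ)/(2*(d:ℝ)))^d with hρ
  have hρ1 : 1 ≤ ρ := by
    rw [hρ]
    apply one_le_pow₀
    rw [le_div_iff₀ (by positivity)]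
    have : (4:ℝ)*d ≤ (μ:ℝ) := by exact_mod_cast hμ4d
    linarith
  have hρpos : 0 < ρ := by linarith
  have hρCard : ρ ≤ (Cube.card : ℝ) := by
    rw [hρ, hCubeCard]
    have hcast : ((W-1:ℕ):ℝ) = (W:ℝ) - 1 := by
      have : 1 ≤ W := by omega
      push_cast [this]
      ring
    rw [Nat.cast_pow, hcast]
    apply pow_le_pow_left₀ (by positivity)
    rw [div_le_iff₀ (by positivity)]
    have hμc : (μ:ℝ) = (d:ℝ)*(W:ℝ) - 1 := by
      have := hμ1
      have : ((d*W : ℕ):ℝ) = ((μ + 1 : ℕ):ℝ) := by exact_mod_cast congrArg Nat.cast this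
      push_cast at this
      linarith
    have hW5' : (5:ℝ) ≤ (W:ℝ) := by exact_mod_cast hW5
    nlinarith
  have hCubeCardle : (Cube.card : ℝ) ≤ X := by
    rw [hCubeCard, hX, Nat.cast_pow]
    apply pow_le_pow_left₀ (by positivity)
    have : W - 1 ≤ μ := hμW
    exact_mod_cast this
  -- pigeonhole
  set T' : ℝ := (c₀/2) * ρ with hT'
  have hT'pos : 0 < T' := by positivity
  have hwitness : ∃ k ∈ Finset.Ioc K M, T' ≤ (k:ℝ)^r * Rk k := by
    by_contra hcon
    push_neg at hcon
    have hKM : K ≤ M := le_of_lt hμK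
    have hsplit := Finset.sum_Ioc_consecutive (fun k => (k:ℝ)^r * Rk k)
      (Nat.zero_le K) hKM
    have hCKbd : ∑ k ∈ Finset.Ioc (0:ℕ) K, (k:ℝ)^r * Rk k ≤ CK := by
      rw [hCK]
      refine Finset.sum_le_sum fun k _ => ?_
      exact mul_le_mul_of_nonneg_left (hTail k) (Real.rpow_nonneg (Nat.cast_nonneg k) r)
    have hub : ∑ k ∈ Finset.Ioc K M, (k:ℝ)^r * Rk k ≤ (M:ℝ) * T' := by
      calc ∑ k ∈ Finset.Ioc K M, (k:ℝ)^r * Rk k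
          ≤ ∑ _k ∈ Finset.Ioc K M, T' :=
            Finset.sum_le_sum fun k hk => le_of_lt (hcon k hk)
        _ = ((Finset.Ioc K M).card : ℝ) * T' := by rw [Finset.sum_const, nsmul_eq_mul]
        _ ≤ (M:ℝ) * T' := by
            refine mul_le_mul_of_nonneg_right ?_ (le_of_lt hT'pos)
            rw [Nat.card_Ioc]
            exact_mod_cast Nat.sub_le M K
    have hlb : (c₀/2) * 2^μ * ρ + 1 ≤ ∑ k ∈ Finset.Ioc K M, (k:ℝ)^r * Rk k := by
      have h1 : c₀ * 2^μ * ρ ≤ (Cube.card : ℝ) * (c₀ * 2^μ) := by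
        rw [mul_comm ((Cube.card : ℝ)) _]
        refine mul_le_mul_of_nonneg_left hρCard (by positivity)
      have h2 : (c₀/2) * 2^μ * ρ ≥ CK + 1 := by
        calc CK + 1 ≤ (2:ℝ)^μ * (c₀/2) := hμCK
          _ = (c₀/2) * 2^μ * 1 := by ring
          _ ≤ (c₀/2) * 2^μ * ρ := by
              refine mul_le_mul_of_nonneg_left hρ1 (by positivity)
      have h3 : c₀ * 2^μ * ρ ≤ (∑ k ∈ Finset.Ioc (0:ℕ) K, (k:ℝ)^r * Rk k)
          + ∑ k ∈ Finset.Ioc K M, (k:ℝ)^r * Rk k := by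
        rw [hsplit]
        exact le_trans h1 hTotal
      have h4 : c₀ * 2^μ * ρ = (c₀/2) * 2^μ * ρ + (c₀/2) * 2^μ * ρ := by ring
      linarith
    have hMT : (M:ℝ) * T' = (c₀/2) * 2^μ * ρ := by
      rw [hT', hM]
      push_cast
      ring
    linarith
  obtain ⟨k, hkmem, hkRk⟩ := hwitness
  obtain ⟨hkK, hkM⟩ := Finset.mem_Ioc.1 hkmem
  have hk1 : 1 ≤ k := by omega
  have hkpos : (0:ℝ) < (k:ℝ) := by exact_mod_cast hk1
  have hkr : (0:ℝ) < (k:ℝ)^r := Real.rpow_pos_of_pos hkpos r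
  have hRklb : T' * ((k:ℝ)^r)⁻¹ ≤ Rk k := by
    calc T' * ((k:ℝ)^r)⁻¹ ≤ ((k:ℝ)^r * Rk k) * ((k:ℝ)^r)⁻¹ :=
          mul_le_mul_of_nonneg_right hkRk (by positivity)
      _ = Rk k := by field_simp
  -- now the Besov chain
  have hterm : ∀ j ∈ Cube,
      (((2:ℝ)^(∑ i, j i))^(r-1) *
        ∑ m ∈ Dfin0 d j, |haarCoeff d (discSeq d S k) (fun i => (j i:ℤ)) m|^r)^(q/r)
      ≤ (2:ℝ)^((((∑ i, j i) : ℕ):ℝ)*(0 - 1/p + 1)*q)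
          * (∑ m ∈ Dfin0 d j, |haarCoeff d (discSeq d S k) (fun i => (j i:ℤ)) m|^p)^(q/p) :=
    fun j _ => besov_term_ge hr1 hrp hrq hq j _
  have hCubene : Cube.Nonempty := by
    rw [hCube]
    apply Fintype.piFinset_nonempty.2
    intro i
    exact Finset.nonempty_Icc.2 (by omega)
  have hcardpos : (0:ℝ) < (Cube.card : ℝ) := by
    exact_mod_cast Finset.card_pos.2 hCubene
  have hjensen : (Cube.card : ℝ)^(1 - q/r) * (Rk k)^(q/r) ≤
      ∑ j ∈ Cube, (((2:ℝ)^(∑ i, j i))^(r-1) *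
        ∑ m ∈ Dfin0 d j, |haarCoeff d (discSeq d S k) (fun i => (j i:ℤ)) m|^r)^(q/r) := by
    have hkey := jensen_rpow Cube (fun j => ((2:ℝ)^(∑ i, j i))^(r-1) *
        ∑ m ∈ Dfin0 d j, |haarCoeff d (discSeq d S k) (fun i => (j i:ℤ)) m|^r)
      (fun j _ => mul_nonneg (Real.rpow_nonneg (by positivity) _)
        (Finset.sum_nonneg fun m _ => Real.rpow_nonneg (abs_nonneg _) r))
      ((one_le_div hr0).2 hrq)
    have hsum_eq : ∑ j ∈ Cube, ((2:ℝ)^(∑ i, j i))^(r-1) *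
        ∑ m ∈ Dfin0 d j, |haarCoeff d (discSeq d S k) (fun i => (j i:ℤ)) m|^r = Rk k := by
      rw [hRk]
    rw [hsum_eq] at hkey
    have hmul := mul_le_mul_of_nonneg_left hkey
      (Real.rpow_nonneg (le_of_lt hcardpos) (1 - q/r))
    have hcollapse : (Cube.card : ℝ)^(1 - q/r) * ((Cube.card : ℝ)^(q/r - 1) *
        ∑ j ∈ Cube, (((2:ℝ)^(∑ i, j i))^(r-1) *
          ∑ m ∈ Dfin0 d j, |haarCoeff d (discSeq d S k) (fun i => (j i:ℤ)) m|^r)^(q/r))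
        = ∑ j ∈ Cube, (((2:ℝ)^(∑ i, j i))^(r-1) *
          ∑ m ∈ Dfin0 d j, |haarCoeff d (discSeq d S k) (fun i => (j i:ℤ)) m|^r)^(q/r) := by
      rw [← mul_assoc, ← Real.rpow_add hcardpos]
      norm_num
    rw [hcollapse] at hmul
    exact hmul
  have hVlb : c₂ * X * ((k:ℝ)^q)⁻¹ ≤ (Cube.card : ℝ)^(1 - q/r) * (Rk k)^(q/r) := by
    have h1 : (T' * ((k:ℝ)^r)⁻¹)^(q/r) ≤ (Rk k)^(q/r) :=
      Real.rpow_le_rpow (by positivity) hRklb (by positivity)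
    have h2 : (X:ℝ)^(1 - q/r) ≤ (Cube.card : ℝ)^(1 - q/r) := by
      refine rpow_base_anti hcardpos hCubeCardle ?_
      have : 1 ≤ q/r := (one_le_div hr0).2 hrq
      linarith
    have h3 : X^(1 - q/r) * (T' * ((k:ℝ)^r)⁻¹)^(q/r)
        ≤ (Cube.card : ℝ)^(1 - q/r) * (Rk k)^(q/r) := by
      apply mul_le_mul h2 h1 (by positivity) (Real.rpow_nonneg (le_of_lt hcardpos) _)
    refine le_trans (le_of_eq ?_) h3
    have hT'e : T' * ((k:ℝ)^r)⁻¹ = A * (X * ((k:ℝ)^r)⁻¹) := by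
      rw [hT', hρ, hA, hX, div_pow]
      ring
    have hkrinv : (((k:ℝ)^r)⁻¹)^(q/r) = ((k:ℝ)^q)⁻¹ := by
      rw [Real.inv_rpow (le_of_lt hkr)]
      congr 1
      rw [← Real.rpow_mul (le_of_lt hkpos)]
      congr 1
      field_simp
    have e2 : (A * (X * ((k:ℝ)^r)⁻¹))^(q/r) = A^(q/r) * (X^(q/r) * ((k:ℝ)^q)⁻¹) := by
      rw [Real.mul_rpow (le_of_lt hApos) (by positivity),
        Real.mul_rpow (le_of_lt hXpos) (by positivity), hkrinv]
    have hXsplit : X^(1 - q/r) * X^(q/r) = X := by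
      rw [← Real.rpow_add hXpos]
      norm_num
    rw [hT'e, e2]
    calc c₂ * X * ((k:ℝ)^q)⁻¹
        = (X^(1 - q/r) * X^(q/r)) * (A^(q/r) * ((k:ℝ)^q)⁻¹) := by rw [hXsplit, hc₂]; ring
      _ = X^(1 - q/r) * (A^(q/r) * (X^(q/r) * ((k:ℝ)^q)⁻¹)) := by ring
  have hbesov1 : ENNReal.ofReal (c₂ * X * ((k:ℝ)^q)⁻¹)
      ≤ besovSum d p q 0 (discSeq d S k) := by
    refine le_trans ?_ (besovSum_ge_subsum p q _ Cube)
    apply ENNReal.ofReal_le_ofReal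
    calc c₂ * X * ((k:ℝ)^q)⁻¹
        ≤ (Cube.card : ℝ)^(1 - q/r) * (Rk k)^(q/r) := hVlb
      _ ≤ ∑ j ∈ Cube, (((2:ℝ)^(∑ i, j i))^(r-1) *
            ∑ m ∈ Dfin0 d j, |haarCoeff d (discSeq d S k) (fun i => (j i:ℤ)) m|^r)^(q/r) :=
          hjensen
      _ ≤ ∑ j ∈ Cube, (2:ℝ)^((((∑ i, j i) : ℕ):ℝ)*(0 - 1/p + 1)*q)
            * (∑ m ∈ Dfin0 d j, |haarCoeff d (discSeq d S k) (fun i => (j i:ℤ)) m|^p)^(q/p) :=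
          Finset.sum_le_sum hterm
  have hrpowstep : ENNReal.ofReal ((c₂ * X * ((k:ℝ)^q)⁻¹)^((1:ℝ)/q))
      ≤ (besovSum d p q 0 (discSeq d S k))^((1:ℝ)/q) := by
    rw [← ENNReal.ofReal_rpow_of_nonneg (by positivity) (by positivity)]
    exact ENNReal.rpow_le_rpow hbesov1 (by positivity)
  have hfinal : c * (k:ℝ)⁻¹ * Real.log (k:ℝ) ^ ((d:ℝ)/q)
      ≤ (c₂ * X * ((k:ℝ)^q)⁻¹)^((1:ℝ)/q) := by
    have hkq : (0:ℝ) < (k:ℝ)^q := Real.rpow_pos_of_pos hkpos q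
    have e4 : (c₂ * X * ((k:ℝ)^q)⁻¹)^((1:ℝ)/q) = c * X^((1:ℝ)/q) * (k:ℝ)⁻¹ := by
      rw [Real.mul_rpow (by positivity) (by positivity),
        Real.mul_rpow (le_of_lt hc₂pos) (le_of_lt hXpos),
        Real.inv_rpow (le_of_lt hkq)]
      have hkk : ((k:ℝ)^q)^((1:ℝ)/q) = (k:ℝ) := by
        rw [← Real.rpow_mul (le_of_lt hkpos)]
        rw [mul_one_div, div_self (ne_of_gt hq0), Real.rpow_one]
      rw [hkk, hc]
    rw [e4]
    have hX1q : X^((1:ℝ)/q) = ((μ:ℕ):ℝ)^((d:ℝ)/q) := by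
      rw [hX, ← Real.rpow_natCast ((μ:ℕ):ℝ) d, ← Real.rpow_mul (Nat.cast_nonneg μ)]
      congr 1
      ring
    have hlog : Real.log (k:ℝ) ≤ ((μ:ℕ):ℝ) := by
      have h1 : Real.log (k:ℝ) ≤ Real.log ((M:ℕ):ℝ) := by
        apply Real.log_le_log hkpos
        exact_mod_cast hkM
      have h2 : Real.log ((M:ℕ):ℝ) = (μ:ℝ) * Real.log 2 := by
        rw [hM]
        push_cast
        rw [Real.log_pow]
      have h3 : Real.log 2 ≤ 1 := by
        have := Real.log_le_sub_one_of_pos (by norm_num : (0:ℝ) < 2)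
        linarith
      calc Real.log (k:ℝ) ≤ (μ:ℝ) * Real.log 2 := by rw [← h2]; exact h1
        _ ≤ (μ:ℝ) * 1 := mul_le_mul_of_nonneg_left h3 (Nat.cast_nonneg μ)
        _ = (μ:ℝ) := mul_one _
    have hlogpow : Real.log (k:ℝ) ^ ((d:ℝ)/q) ≤ ((μ:ℕ):ℝ)^((d:ℝ)/q) := by
      apply Real.rpow_le_rpow (Real.log_nonneg (by exact_mod_cast hk1)) hlog (by positivity)
    calc c * (k:ℝ)⁻¹ * Real.log (k:ℝ) ^ ((d:ℝ)/q)
        ≤ c * (k:ℝ)⁻¹ * ((μ:ℕ):ℝ)^((d:ℝ)/q) := by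
          refine mul_le_mul_of_nonneg_left hlogpow (by positivity)
      _ = c * X^((1:ℝ)/q) * (k:ℝ)⁻¹ := by rw [hX1q]; ring
  have hmemk : k ∈ {N : ℕ | ENNReal.ofReal (c * (N:ℝ)⁻¹ * Real.log N ^ ((d:ℝ)/q)) ≤
      (besovSum d p q 0 (discSeq d S N)) ^ (1/q)} := by
    have := le_trans (ENNReal.ofReal_le_ofReal hfinal) hrpowstep
    simpa using this
  have : k ≤ K := hK hmemk
  omega

end
end

section
/- Let d ∈ ℕ and let f(x) = x_1⋯x_d for x = (x_1,…,x_d) ∈ [0,1)^d. Then there exist constants c_d, C_d > 0 depending only on d such that for every j ∈ ℕ_{−1}^d and every m ∈ 𝔻_j: c_d · 2^{−2|j|} ≤ |⟨f, h_{j,m}⟩| ≤ C_d · 2^{−2|j|}. -/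
open MeasureTheory
open scoped ENNReal

noncomputable section

lemma int_Ico_id (a b : ℝ) (hab : a ≤ b) : ∫ x in Set.Ico a b, x = (b^2 - a^2)/2 := by
  rw [MeasureTheory.integral_Ico_eq_integral_Ioo, ← MeasureTheory.integral_Ioc_eq_integral_Ioo,
    ← intervalIntegral.integral_of_le hab, integral_id]

lemma coeff_neg_one (m : ℕ) : ∫ x in Set.Icc (0:ℝ) 1, x * haar1 (-1) m x = 1/2 := by
  have h1 : (fun x : ℝ => x * haar1 (-1) m x)
      = (Set.Ico (0:ℝ) 1).indicator (fun x => x) := by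
    funext x
    by_cases h : x ∈ Set.Ico (0:ℝ) 1
    · rw [Set.indicator_of_mem h]
      simp [haar1, h.1, h.2]
    · rw [Set.indicator_of_notMem h]
      rw [Set.mem_Ico, not_and_or] at h
      rcases h with h | h <;> simp [haar1, h]
  rw [h1, MeasureTheory.setIntegral_indicator measurableSet_Ico,
    show Set.Icc (0:ℝ) 1 ∩ Set.Ico 0 1 = Set.Ico 0 1 by
      rw [Set.inter_eq_right]; exact Set.Ico_subset_Icc_self]
  rw [int_Ico_id 0 1 zero_le_one]; norm_num

lemma coeff_nonneg (j : ℤ) (hj : j ≠ -1) (m : ℕ) (hm : m < 2 ^ j.toNat) :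
    ∫ x in Set.Icc (0:ℝ) 1, x * haar1 j m x = -(((2:ℝ) ^ (2 * j.toNat))⁻¹/4) := by
  set n := j.toNat with hn
  have h2 : (0:ℝ) < 2 ^ n := by positivity
  set a : ℝ := (m:ℝ)/2^n with ha
  set b : ℝ := ((m:ℝ) + 1/2)/2^n with hb
  set c : ℝ := ((m:ℝ) + 1)/2^n with hc
  have hab : a ≤ b := by rw [ha, hb]; gcongr; linarith
  have hbc : b ≤ c := by rw [hb, hc]; gcongr; linarith
  have ha0 : 0 ≤ a := by positivity
  have hc1 : c ≤ 1 := by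
    rw [hc, div_le_one h2]
    have : (m:ℝ) + 1 ≤ (2:ℝ)^n := by exact_mod_cast hm
    linarith
  have key : (fun x : ℝ => x * haar1 j m x)
      = fun x => (Set.Ico a b).indicator (fun x => x) x
          - (Set.Ico b c).indicator (fun x => x) x := by
    funext x
    simp only [haar1, if_neg hj, ← hn, ← ha, ← hb, ← hc, Set.indicator_apply, Set.mem_Ico]
    by_cases hP : a ≤ x ∧ x < b
    · have hQ : ¬ (b ≤ x ∧ x < c) := fun hq => absurd hP.2 (not_lt.mpr hq.1)
      simp [hP, hQ]
    · by_cases hQ : b ≤ x ∧ x < c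
      · simp [hP, hQ]
      · simp [hP, hQ]
  have hi1 : IntegrableOn (fun x : ℝ => x) (Set.Ico a b) :=
    ((continuous_id.integrableOn_Icc (a := a) (b := b))).mono_set Set.Ico_subset_Icc_self
  have hi2 : IntegrableOn (fun x : ℝ => x) (Set.Ico b c) :=
    ((continuous_id.integrableOn_Icc (a := b) (b := c))).mono_set Set.Ico_subset_Icc_self
  have hs1 : Set.Icc (0:ℝ) 1 ∩ Set.Ico a b = Set.Ico a b := by
    rw [Set.inter_eq_right]
    intro x hx
    exact Set.mem_Icc.mpr ⟨ha0.trans hx.1, (hx.2.le.trans hbc).trans hc1⟩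
  have hs2 : Set.Icc (0:ℝ) 1 ∩ Set.Ico b c = Set.Ico b c := by
    rw [Set.inter_eq_right]
    intro x hx
    exact Set.mem_Icc.mpr ⟨(ha0.trans hab).trans hx.1, hx.2.le.trans hc1⟩
  rw [key, MeasureTheory.integral_sub
      ((hi1.integrable_indicator measurableSet_Ico).integrableOn)
      ((hi2.integrable_indicator measurableSet_Ico).integrableOn),
    MeasureTheory.setIntegral_indicator measurableSet_Ico,
    MeasureTheory.setIntegral_indicator measurableSet_Ico, hs1, hs2,
    int_Ico_id a b hab, int_Ico_id b c hbc, ha, hb, hc]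
  have h2' : ((2:ℝ)^n) ≠ 0 := ne_of_gt h2
  field_simp
  ring

lemma abs_coeff1 (j : ℤ) (m : ℕ) (hm : m < 2 ^ j.toNat) :
    |∫ x in Set.Icc (0:ℝ) 1, x * haar1 j m x|
      = (if j = -1 then (2:ℝ) else 4)⁻¹ * ((2:ℝ) ^ (2 * j.toNat))⁻¹ := by
  by_cases hj : j = -1
  · subst hj
    rw [coeff_neg_one m]
    norm_num [show ((-1:ℤ)).toNat = 0 from rfl]
  · rw [coeff_nonneg j hj m hm, if_neg hj, abs_neg, abs_div]
    rw [abs_of_nonneg (by positivity : (0:ℝ) ≤ ((2:ℝ) ^ (2 * j.toNat))⁻¹)]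
    norm_num
    ring

lemma haarCoeff_prod_eq (d : ℕ) (j : Fin d → ℤ) (m : Fin d → ℕ) :
    haarCoeff d (fun x => ∏ i, x i) j m
      = ∏ i, ∫ x in Set.Icc (0:ℝ) 1, x * haar1 (j i) (m i) x := by
  unfold haarCoeff haarFn unitCube
  have hmeas : MeasurableSet (Set.univ.pi fun _ : Fin d => Set.Icc (0:ℝ) 1) :=
    MeasurableSet.univ_pi fun _ => measurableSet_Icc
  rw [← MeasureTheory.integral_indicator hmeas]
  have hfun : (Set.univ.pi fun _ : Fin d => Set.Icc (0:ℝ) 1).indicator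
        (fun x => (∏ i, x i) * ∏ i, haar1 (j i) (m i) (x i))
      = fun x => ∏ i, (Set.Icc (0:ℝ) 1).indicator
          (fun t => t * haar1 (j i) (m i) t) (x i) := by
    funext x
    by_cases h : x ∈ Set.univ.pi fun _ : Fin d => Set.Icc (0:ℝ) 1
    · rw [Set.indicator_of_mem h, ← Finset.prod_mul_distrib]
      refine Finset.prod_congr rfl fun i _ => ?_
      rw [Set.indicator_of_mem (h i (Set.mem_univ i))]
    · rw [Set.indicator_of_notMem h]
      obtain ⟨i, hi⟩ : ∃ i, x i ∉ Set.Icc (0:ℝ) 1 := by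
        rw [Set.mem_pi] at h
        push_neg at h
        obtain ⟨i, _, hi⟩ := h
        exact ⟨i, hi⟩
      exact (Finset.prod_eq_zero (Finset.mem_univ i)
        (Set.indicator_of_notMem hi _)).symm
  rw [hfun, MeasureTheory.integral_fintype_prod_volume_eq_prod]
  exact Finset.prod_congr rfl fun i _ =>
    (MeasureTheory.integral_indicator measurableSet_Icc)

/-- The Haar coefficients of `f(x) = x₁⋯x_d` satisfy
`|⟨f, h_{j,m}⟩| ≍_d 2^{-2|j|}`. -/
theorem haar_coeff_volume_part (d : ℕ) (hd : 0 < d) :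
    ∃ c C : ℝ, 0 < c ∧ 0 < C ∧
      ∀ (j : Fin d → ℤ), (∀ i, -1 ≤ j i) →
        ∀ (m : Fin d → ℕ), (∀ i, m i < 2 ^ (j i).toNat) →
          c * ((2:ℝ) ^ (2 * jnorm d j))⁻¹ ≤
              |haarCoeff d (fun x => ∏ i, x i) j m| ∧
            |haarCoeff d (fun x => ∏ i, x i) j m| ≤
              C * ((2:ℝ) ^ (2 * jnorm d j))⁻¹ := by
  refine ⟨(1/4)^d, 1, by positivity, one_pos, fun j hj m hm => ?_⟩
  have habs : |haarCoeff d (fun x => ∏ i, x i) j m|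
      = ∏ i, ((if j i = -1 then (2:ℝ) else 4)⁻¹ * ((2:ℝ) ^ (2 * (j i).toNat))⁻¹) := by
    rw [haarCoeff_prod_eq, Finset.abs_prod]
    exact Finset.prod_congr rfl fun i _ => abs_coeff1 (j i) (m i) (hm i)
  have hP : ∏ i, ((2:ℝ) ^ (2 * (j i).toNat))⁻¹ = ((2:ℝ) ^ (2 * jnorm d j))⁻¹ := by
    rw [Finset.prod_inv_distrib, Finset.prod_pow_eq_pow_sum, jnorm, Finset.mul_sum]
  have hsplit : |haarCoeff d (fun x => ∏ i, x i) j m|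
      = (∏ i, (if j i = -1 then (2:ℝ) else 4)⁻¹) * ((2:ℝ) ^ (2 * jnorm d j))⁻¹ := by
    rw [habs, Finset.prod_mul_distrib, hP]
  have hPpos : (0:ℝ) ≤ ((2:ℝ) ^ (2 * jnorm d j))⁻¹ := by positivity
  have hw_le : ∏ i, (if j i = -1 then (2:ℝ) else 4)⁻¹ ≤ 1 := by
    apply Finset.prod_le_one
    · intro i _; split_ifs <;> norm_num
    · intro i _; split_ifs <;> norm_num
  have hw_ge : (1/4:ℝ)^d ≤ ∏ i, (if j i = -1 then (2:ℝ) else 4)⁻¹ := by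
    calc (1/4:ℝ)^d = ∏ _i : Fin d, (1/4:ℝ) := by
          rw [Finset.prod_const, Finset.card_univ, Fintype.card_fin]
      _ ≤ ∏ i, (if j i = -1 then (2:ℝ) else 4)⁻¹ := by
          apply Finset.prod_le_prod
          · intro i _; norm_num
          · intro i _; split_ifs <;> norm_num
  constructor
  · rw [hsplit]
    exact mul_le_mul_of_nonneg_right hw_ge hPpos
  · rw [hsplit, one_mul]
    exact mul_le_of_le_one_left hPpos hw_le |>.trans_eq rfl


end
end

section
/- Let 0 < α < β < ∞ and let f ∈ L_∞([0,1)^d) with ‖f | exp(L^α)‖ < ∞. Then ‖f | exp(L^β)‖ < ∞ and ‖f | exp(L^β)‖ ≤ C · ‖f | exp(L^α)‖^{α/β} · ‖f‖_{L_∞([0,1)^d)}^{1−α/β}, where C > 0 depends only on α, β and the fixed choices of Young functions. -/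
open MeasureTheory
open scoped ENNReal

noncomputable section

namespace ExpOrliczAux

variable {γ : ℝ} {ψ : ℝ → ℝ}

lemma young_nonneg (h : IsYoungExp γ ψ) {x : ℝ} (hx : 0 ≤ x) : 0 ≤ ψ x := by
  rcases hx.eq_or_lt with h' | h'
  · simp [← h', h.2.1]
  · exact (h.2.2.1 x h').le

lemma young_scale (h : IsYoungExp γ ψ) {t x : ℝ} (ht0 : 0 ≤ t) (ht1 : t ≤ 1) (hx : 0 ≤ x) :
    ψ (t * x) ≤ t * ψ x := by
  have := h.1.2 (Set.mem_Ici.2 le_rfl) (Set.mem_Ici.2 hx) (by linarith : (0:ℝ) ≤ 1 - t) ht0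
    (by ring)
  simpa [h.2.1] using this

lemma young_mono (h : IsYoungExp γ ψ) {x y : ℝ} (hx : 0 ≤ x) (hxy : x ≤ y) : ψ x ≤ ψ y := by
  rcases eq_or_lt_of_le (hx.trans hxy) with h0 | h0
  · have hx0 : x = 0 := le_antisymm (hxy.trans h0.symm.le) hx
    rw [hx0, ← h0]
  · have hxyd : x = (x / y) * y := by field_simp
    calc ψ x = ψ ((x / y) * y) := by rw [← hxyd]
      _ ≤ (x / y) * ψ y := young_scale h (by positivity) (by rw [div_le_one h0]; exact hxy) h0.le
      _ ≤ 1 * ψ y := by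
          apply mul_le_mul_of_nonneg_right _ (young_nonneg h h0.le)
          rw [div_le_one h0]; exact hxy
      _ = ψ y := one_mul _

lemma young_measurable_max (h : IsYoungExp γ ψ) : Measurable (fun y : ℝ => ψ (max y 0)) := by
  apply Monotone.measurable
  intro y z hyz
  exact young_mono h (le_max_right _ _) (max_le_max hyz le_rfl)

lemma young_aesm {X : Type*} [MeasurableSpace X] {μ : Measure X} {g : X → ℝ}
    (h : IsYoungExp γ ψ) (hg : AEStronglyMeasurable g μ) (hg0 : ∀ x, 0 ≤ g x) :
    AEStronglyMeasurable (fun x => ψ (g x)) μ := by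
  have h1 : AEMeasurable (fun x => ψ (max (g x) 0)) μ :=
    (young_measurable_max h).comp_aemeasurable hg.aemeasurable
  refine h1.aestronglyMeasurable.congr (Filter.Eventually.of_forall fun x => ?_)
  simp [max_eq_left (hg0 x)]

lemma young_integrable {X : Type*} [MeasurableSpace X] {μ : Measure X} [IsFiniteMeasure μ]
    {g : X → ℝ} (h : IsYoungExp γ ψ) (hg : AEStronglyMeasurable g μ) (hg0 : ∀ x, 0 ≤ g x)
    {M : ℝ} (hM : ∀ᵐ x ∂μ, g x ≤ M) : Integrable (fun x => ψ (g x)) μ := by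
  refine (integrable_const (ψ (max M 0))).mono' (young_aesm h hg hg0) ?_
  filter_upwards [hM] with x hx
  rw [Real.norm_eq_abs, abs_of_nonneg (young_nonneg h (hg0 x))]
  exact young_mono h (hg0 x) (hx.trans (le_max_left _ _))

end ExpOrliczAux

open ExpOrliczAux in
lemma orliczNorm_le_of (d : ℕ) (ψ : ℝ → ℝ) (f : (Fin d → ℝ) → ℝ) {K : ℝ} (hK : 0 < K)
    (h : (∫ x in unitCubeIco d, ψ (|f x| / K)) ≤ 1) : orliczNorm d ψ f ≤ ENNReal.ofReal K :=
  iInf_le (fun K : {K : ℝ // 0 < K ∧ (∫ x in unitCubeIco d, ψ (|f x| / K)) ≤ 1} =>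
    ENNReal.ofReal K.1) ⟨K, hK, h⟩

open ExpOrliczAux in
/-- Interpolation between exponential Orlicz norms and `L_∞`:
for `0 < α < β`, `‖f | exp(L^β)‖ ≤ C ‖f | exp(L^α)‖^{α/β} ‖f‖_∞^{1-α/β}`. -/
theorem exp_orlicz_interpolation (d : ℕ) (hd : 0 < d) (α β : ℝ) (h0 : 0 < α)
    (hαβ : α < β) (ψa ψb : ℝ → ℝ) (ha : IsYoungExp α ψa) (hb : IsYoungExp β ψb) :
    ∃ C : ℝ, 0 < C ∧ ∀ f : (Fin d → ℝ) → ℝ,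
      MemLp f ⊤ (volume.restrict (unitCubeIco d)) →
      orliczNorm d ψa f ≠ ⊤ →
      orliczNorm d ψb f ≠ ⊤ ∧
        orliczNorm d ψb f ≤ ENNReal.ofReal C * (orliczNorm d ψa f) ^ (α/β) *
          (eLpNorm f ⊤ (volume.restrict (unitCubeIco d))) ^ (1 - α/β) := by
  have hβ : 0 < β := h0.trans hαβ
  set θ := α / β with hθdef
  have hθ0 : 0 < θ := div_pos h0 hβ
  have hθ1 : θ < 1 := (div_lt_one hβ).2 hαβ
  obtain ⟨xa', hxa'⟩ := ha.2.2.2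
  obtain ⟨xb', hxb'⟩ := hb.2.2.2
  set xa := max xa' 1 with hxadef
  set xb := max xb' 1 with hxbdef
  have hxa1 : (1:ℝ) ≤ xa := le_max_right _ _
  have hxb1 : (1:ℝ) ≤ xb := le_max_right _ _
  have hxa : ∀ x ≥ xa, ψa x = Real.exp (x ^ α) - 1 := fun x hx =>
    hxa' x ((le_max_left _ _).trans hx)
  have hxb : ∀ x ≥ xb, ψb x = Real.exp (x ^ β) - 1 := fun x hx =>
    hxb' x ((le_max_left _ _).trans hx)
  set Ca := Real.exp (xa ^ α) - 1 with hCadef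
  set Cb := ψb xb with hCbdef
  have hCa0 : 0 ≤ Ca := by
    have h1 : (0:ℝ) ≤ xa ^ α := Real.rpow_nonneg (by linarith) _
    have h2 := Real.one_le_exp h1
    rw [hCadef]; linarith
  have hCb0 : 0 ≤ Cb := young_nonneg hb (by linarith)
  set B := 1 + Ca + Cb with hBdef
  have hB1 : (1:ℝ) ≤ B := by linarith
  have hB0 : (0:ℝ) < B := by linarith
  refine ⟨B, hB0, fun f hf hInfA => ?_⟩
  set μ := volume.restrict (unitCubeIco d) with hμdef
  have hvol : volume (unitCubeIco d) = 1 := by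
    rw [unitCubeIco, volume_pi_pi]
    simp [Real.volume_Ico]
  haveI : IsProbabilityMeasure μ := ⟨by rw [hμdef, Measure.restrict_apply_univ, hvol]⟩
  have hfm : AEStronglyMeasurable f μ := hf.1
  have habs : AEStronglyMeasurable (fun x => |f x|) μ := by
    simpa [Real.norm_eq_abs] using hfm.norm
  have haesm : ∀ K : ℝ, AEStronglyMeasurable (fun x => |f x| / K) μ := fun K => by
    simpa [div_eq_mul_inv] using habs.mul_const K⁻¹
  set E := eLpNorm f ⊤ μ with hEdef
  have hEne : E ≠ ⊤ := hf.eLpNorm_ne_top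
  set M := E.toReal with hMdef
  have hM0 : 0 ≤ M := ENNReal.toReal_nonneg
  have hMae : ∀ᵐ x ∂μ, |f x| ≤ M := by
    have h1 : ∀ᵐ x ∂μ, (‖f x‖₊ : ℝ≥0∞) ≤ eLpNormEssSup f μ := ae_le_eLpNormEssSup
    filter_upwards [h1] with x hx
    have hx' : ((‖f x‖₊ : ℝ≥0∞)).toReal ≤ E.toReal :=
      ENNReal.toReal_mono hEne (by rw [hEdef, eLpNorm_exponent_top]; exact hx)
    simpa [Real.norm_eq_abs] using hx'
  by_cases hE0 : E = 0
  · have hf0 : f =ᵐ[μ] 0 := (eLpNorm_eq_zero_iff hfm (by simp)).1 hE0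
    have hzero : orliczNorm d ψb f = 0 := by
      refine le_antisymm ?_ zero_le
      refine ENNReal.le_of_forall_pos_le_add fun ε hε _ => ?_
      rw [zero_add]
      have hεR : (0:ℝ) < (ε:ℝ) := hε
      have hint : (∫ x in unitCubeIco d, ψb (|f x| / (ε:ℝ))) ≤ 1 := by
        have h2 : (∫ x in unitCubeIco d, ψb (|f x| / (ε:ℝ))) = 0 := by
          apply integral_eq_zero_of_ae
          filter_upwards [hf0] with x hx
          simp only [Pi.zero_apply] at hx
          simp [hx, hb.2.1]
        linarith
      calc orliczNorm d ψb f ≤ ENNReal.ofReal (ε:ℝ) := orliczNorm_le_of d ψb f hεR hint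
        _ = (ε : ℝ≥0∞) := ENNReal.ofReal_coe_nnreal
    refine ⟨by simp [hzero], by simp [hzero]⟩
  · have hMpos : 0 < M := ENNReal.toReal_pos hE0 hEne
    have hne : Nonempty {K : ℝ // 0 < K ∧ (∫ x in unitCubeIco d, ψa (|f x| / K)) ≤ 1} := by
      by_contra hcon
      rw [not_nonempty_iff] at hcon
      exact hInfA (iInf_of_empty _)
    have main : ∀ A : ℝ, 0 < A → (∫ x, ψa (|f x| / A) ∂μ) ≤ 1 →
        orliczNorm d ψb f ≤ ENNReal.ofReal (B * (A ^ θ * M ^ (1 - θ))) := by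
      intro A hA hAint
      set K0 := A ^ θ * M ^ (1 - θ) with hK0def
      have hK0 : 0 < K0 := mul_pos (Real.rpow_pos_of_pos hA _) (Real.rpow_pos_of_pos hMpos _)
      have hptwise : ∀ᵐ x ∂μ, ψb (|f x| / K0) ≤ ψa (|f x| / A) + (Ca + Cb) := by
        filter_upwards [hMae] with x hxM
        set u := |f x| with hudef
        have hu0 : 0 ≤ u := abs_nonneg _
        by_cases hcase : u / K0 < xb
        · have h1 : ψb (u / K0) ≤ Cb := by
            rw [hCbdef]; exact young_mono hb (by positivity) hcase.le
          have h2 : 0 ≤ ψa (u / A) := young_nonneg ha (by positivity)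
          linarith
        · push_neg at hcase
          have hu_pos : 0 < u := by
            rcases hu0.eq_or_lt with h' | h'
            · rw [← h'] at hcase
              rw [zero_div] at hcase
              linarith
            · exact h'
          have hstep : (u / K0) ^ β ≤ (u / A) ^ α := by
            rw [Real.div_rpow hu0 hK0.le, Real.div_rpow hu0 hA.le]
            have hK0β : K0 ^ β = A ^ α * M ^ (β - α) := by
              rw [hK0def, Real.mul_rpow (Real.rpow_nonneg hA.le _) (Real.rpow_nonneg hM0 _),
                ← Real.rpow_mul hA.le, ← Real.rpow_mul hM0]
              congr 2
              · rw [hθdef]; field_simp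
              · rw [hθdef]; field_simp
            have huβ : u ^ β ≤ u ^ α * M ^ (β - α) := by
              have h3 : u ^ β = u ^ α * u ^ (β - α) := by
                rw [← Real.rpow_add hu_pos]; ring_nf
              rw [h3]
              have h4 : u ^ (β - α) ≤ M ^ (β - α) := Real.rpow_le_rpow hu0 hxM (by linarith)
              exact mul_le_mul_of_nonneg_left h4 (Real.rpow_nonneg hu0 _)
            rw [hK0β, div_le_div_iff₀ (by positivity) (by positivity)]
            calc u ^ β * A ^ α ≤ (u ^ α * M ^ (β - α)) * A ^ α :=
                  mul_le_mul_of_nonneg_right huβ (by positivity)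
              _ = u ^ α * (A ^ α * M ^ (β - α)) := by ring
          have hexp : ψb (u / K0) = Real.exp ((u / K0) ^ β) - 1 := hxb _ hcase
          have hexp2 : Real.exp ((u / K0) ^ β) - 1 ≤ Real.exp ((u / A) ^ α) - 1 := by
            have := Real.exp_le_exp.2 hstep; linarith
          by_cases hcase2 : xa ≤ u / A
          · have h5 : Real.exp ((u / A) ^ α) - 1 = ψa (u / A) := (hxa _ hcase2).symm
            rw [hexp]
            linarith
          · push_neg at hcase2
            have h4 : Real.exp ((u / A) ^ α) - 1 ≤ Ca := by
              rw [hCadef]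
              have h6 : (u / A) ^ α ≤ xa ^ α :=
                Real.rpow_le_rpow (by positivity) hcase2.le h0.le
              have := Real.exp_le_exp.2 h6; linarith
            have h5 : 0 ≤ ψa (u / A) := young_nonneg ha (by positivity)
            rw [hexp]; linarith
      have hdivae : ∀ K : ℝ, 0 < K → ∀ᵐ x ∂μ, |f x| / K ≤ M / K := by
        intro K hK
        filter_upwards [hMae] with x hx
        gcongr
      have hia : Integrable (fun x => ψa (|f x| / A)) μ :=
        young_integrable ha (haesm A) (fun x => by positivity) (hdivae A hA)
      have hib : Integrable (fun x => ψb (|f x| / K0)) μ :=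
        young_integrable hb (haesm K0) (fun x => by positivity) (hdivae K0 hK0)
      have hint1 : (∫ x, ψb (|f x| / K0) ∂μ) ≤ B := by
        have h6 : (∫ x, ψb (|f x| / K0) ∂μ) ≤ ∫ x, (ψa (|f x| / A) + (Ca + Cb)) ∂μ :=
          integral_mono_ae hib (hia.add (integrable_const _)) hptwise
        rw [integral_add hia (integrable_const _), integral_const, probReal_univ,
          one_smul] at h6
        rw [hBdef]; linarith
      have hBK0 : 0 < B * K0 := mul_pos hB0 hK0
      have hfinal : (∫ x, ψb (|f x| / (B * K0)) ∂μ) ≤ 1 := by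
        have hpt2 : ∀ x, ψb (|f x| / (B * K0)) ≤ (1 / B) * ψb (|f x| / K0) := by
          intro x
          have harg : |f x| / (B * K0) = (1 / B) * (|f x| / K0) := by
            field_simp
          rw [harg]
          exact young_scale hb (by positivity) (by rw [div_le_one hB0]; exact hB1)
            (by positivity)
        have hiK : Integrable (fun x => ψb (|f x| / (B * K0))) μ :=
          young_integrable hb (haesm _) (fun x => by positivity) (hdivae _ hBK0)
        calc (∫ x, ψb (|f x| / (B * K0)) ∂μ)
            ≤ ∫ x, (1 / B) * ψb (|f x| / K0) ∂μ :=
              integral_mono_ae hiK (hib.const_mul _) (Filter.Eventually.of_forall hpt2)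
          _ = (1 / B) * ∫ x, ψb (|f x| / K0) ∂μ := integral_const_mul _ _
          _ ≤ (1 / B) * B := mul_le_mul_of_nonneg_left hint1 (by positivity)
          _ = 1 := by field_simp
      have h7 : orliczNorm d ψb f ≤ ENNReal.ofReal (B * K0) :=
        orliczNorm_le_of d ψb f hBK0 hfinal
      rwa [hK0def] at h7
    have hneT : orliczNorm d ψb f ≠ ⊤ := by
      obtain ⟨A₀⟩ := hne
      exact ne_top_of_le_ne_top ENNReal.ofReal_ne_top (main A₀.1 A₀.2.1 A₀.2.2)
    refine ⟨hneT, ?_⟩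
    set c := ENNReal.ofReal B * E ^ (1 - θ) with hcdef
    have hcne : c ≠ ⊤ :=
      ENNReal.mul_ne_top ENNReal.ofReal_ne_top (ENNReal.rpow_ne_top_of_nonneg (by linarith) hEne)
    have main' : ∀ A : {K : ℝ // 0 < K ∧ (∫ x in unitCubeIco d, ψa (|f x| / K)) ≤ 1},
        orliczNorm d ψb f ≤ (ENNReal.ofReal A.1) ^ θ * c := by
      intro A
      have h7 := main A.1 A.2.1 A.2.2
      have heq : ENNReal.ofReal (B * (A.1 ^ θ * M ^ (1 - θ)))
          = (ENNReal.ofReal A.1) ^ θ * c := by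
        rw [ENNReal.ofReal_mul hB0.le,
          ENNReal.ofReal_mul (Real.rpow_nonneg A.2.1.le _),
          ← ENNReal.ofReal_rpow_of_pos A.2.1, ← ENNReal.ofReal_rpow_of_pos hMpos,
          hMdef, ENNReal.ofReal_toReal hEne, hcdef]
        ring
      rw [heq] at h7
      exact h7
    have hle : orliczNorm d ψb f ≤
        ⨅ A : {K : ℝ // 0 < K ∧ (∫ x in unitCubeIco d, ψa (|f x| / K)) ≤ 1},
          (ENNReal.ofReal A.1) ^ θ * c := le_iInf main'
    have horl : orliczNorm d ψa f =
        ⨅ A : {K : ℝ // 0 < K ∧ (∫ x in unitCubeIco d, ψa (|f x| / K)) ≤ 1},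
          ENNReal.ofReal A.1 := rfl
    have hiInf : (⨅ A : {K : ℝ // 0 < K ∧ (∫ x in unitCubeIco d, ψa (|f x| / K)) ≤ 1},
        (ENNReal.ofReal A.1) ^ θ) = (orliczNorm d ψa f) ^ θ := by
      rw [horl]
      exact (OrderIso.map_iInf (ENNReal.orderIsoRpow θ hθ0)
        (fun A : {K : ℝ // 0 < K ∧ (∫ x in unitCubeIco d, ψa (|f x| / K)) ≤ 1} =>
          ENNReal.ofReal A.1)).symm
    calc orliczNorm d ψb f
        ≤ ⨅ A : {K : ℝ // 0 < K ∧ (∫ x in unitCubeIco d, ψa (|f x| / K)) ≤ 1},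
            (ENNReal.ofReal A.1) ^ θ * c := hle
      _ = (⨅ A : {K : ℝ // 0 < K ∧ (∫ x in unitCubeIco d, ψa (|f x| / K)) ≤ 1},
            (ENNReal.ofReal A.1) ^ θ) * c :=
          (ENNReal.iInf_mul' (fun h => absurd h hcne) (fun _ => hne)).symm
      _ = (orliczNorm d ψa f) ^ θ * c := by rw [hiInf]
      _ = ENNReal.ofReal B * (orliczNorm d ψa f) ^ θ * E ^ (1 - θ) := by
          rw [hcdef]; ring


end
end

section
/- Let d ∈ ℕ and let f : [0,1]^{d+1} → ℝ be a bounded measurable function (so that all horizontal slices f(·,t_{d+1}) lie in L_2([0,1]^d)). Then ‖f | 𝒟_0^{d+1}‖ ≤ sup_{t_{d+1} ∈ [0,1]} ‖f(·,t_{d+1}) | 𝒟_0^d‖. -/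
open MeasureTheory
open scoped ENNReal

noncomputable section

namespace DSlice

def Iv (j m : ℕ) : Set ℝ := Set.Ico ((m:ℝ)/2^j) (((m:ℝ)+1)/2^j)

lemma endL (j m : ℕ) : (((2*m : ℕ)):ℝ)/2^(j+1) = (m:ℝ)/2^j := by push_cast; ring
lemma endM1 (j m : ℕ) : ((((2*m : ℕ)):ℝ)+1)/2^(j+1) = ((m:ℝ)+1/2)/2^j := by push_cast; ring
lemma endM2 (j m : ℕ) : (((2*m+1 : ℕ)):ℝ)/2^(j+1) = ((m:ℝ)+1/2)/2^j := by push_cast; ring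
lemma endR (j m : ℕ) : ((((2*m+1 : ℕ)):ℝ)+1)/2^(j+1) = ((m:ℝ)+1)/2^j := by push_cast; ring

lemma haar1_nat (j m : ℕ) (x : ℝ) :
    haar1 (j:ℤ) m x = (Iv (j+1) (2*m)).indicator 1 x - (Iv (j+1) (2*m+1)).indicator 1 x := by
  have h2 : ¬((j:ℤ) = -1) := by omega
  simp only [haar1, if_neg h2, Int.toNat_natCast, Iv, Set.indicator_apply, Set.mem_Ico,
    endL, endM1, endM2, endR, Pi.one_apply]
  split_ifs <;> norm_num <;> linarith

lemma haar1_abs_le (j : ℤ) (m : ℕ) (x : ℝ) : |haar1 j m x| ≤ 1 := by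
  unfold haar1; split_ifs <;> norm_num

lemma haar1_measurable (j : ℕ) (m : ℕ) : Measurable (haar1 (j:ℤ) m) := by
  have : haar1 (j:ℤ) m = fun x => (Iv (j+1) (2*m)).indicator 1 x -
      (Iv (j+1) (2*m+1)).indicator 1 x := funext (haar1_nat j m)
  rw [this]
  exact ((measurable_const.indicator measurableSet_Ico).sub
    (measurable_const.indicator measurableSet_Ico))

lemma Iv_subset {k j : ℕ} (m : ℕ) (h : k ≤ j) : Iv j m ⊆ Iv k (m / 2^(j-k)) := by
  rintro x ⟨h1, h2⟩
  have hpow : (2:ℝ)^j = 2^k * 2^(j-k) := by rw [← pow_add]; congr 1; omega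
  have hn : 0 < 2^(j-k) := Nat.pow_pos (by norm_num)
  have hq1 : ((m / 2^(j-k) : ℕ):ℝ) * 2^(j-k) ≤ (m:ℝ) := by
    exact_mod_cast Nat.cast_le.mpr (Nat.div_mul_le_self m _)
  have hq2 : (m:ℝ) + 1 ≤ (((m / 2^(j-k) : ℕ):ℝ) + 1) * 2^(j-k) := by
    have : m < (m / 2^(j-k) + 1) * 2^(j-k) :=
      (Nat.div_lt_iff_lt_mul hn).mp (Nat.lt_succ_self _)
    exact_mod_cast this
  have hk : (0:ℝ) < 2^k := by positivity
  have hj : (0:ℝ) < 2^j := by positivity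
  have hr : (0:ℝ) < 2^(j-k) := by positivity
  have hx1 : (m:ℝ) ≤ x * 2^j := (div_le_iff₀ hj).mp h1
  have hx2 : x * 2^j < (m:ℝ) + 1 := (lt_div_iff₀ hj).mp h2
  rw [hpow] at hx1 hx2
  constructor
  · rw [div_le_iff₀ hk]
    by_contra hcon
    push_neg at hcon
    have := mul_lt_mul_of_pos_right hcon hr
    nlinarith
  · rw [lt_div_iff₀ hk]
    by_contra hcon
    push_neg at hcon
    have := mul_le_mul_of_nonneg_right hcon hr.le
    nlinarith

lemma Iv_disjoint {j a b : ℕ} (hab : a ≠ b) {x : ℝ} (ha : x ∈ Iv j a) (hb : x ∈ Iv j b) :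
    False := by
  obtain ⟨ha1, ha2⟩ := ha
  obtain ⟨hb1, hb2⟩ := hb
  have hj : (0:ℝ) < 2^j := by positivity
  have ha1' := (div_le_iff₀ hj).mp ha1
  have ha2' := (lt_div_iff₀ hj).mp ha2
  have hb1' := (div_le_iff₀ hj).mp hb1
  have hb2' := (lt_div_iff₀ hj).mp hb2
  rcases Nat.lt_or_ge a b with h | h
  · have : ((a:ℝ)) + 1 ≤ (b:ℝ) := by exact_mod_cast h
    linarith
  · have hba : b < a := Nat.lt_of_le_of_ne h (Ne.symm hab)
    have : ((b:ℝ)) + 1 ≤ (a:ℝ) := by exact_mod_cast hba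
    linarith

lemma haar1_eq_zero {j m : ℕ} {x : ℝ} (hx : x ∉ Iv j m) : haar1 (j:ℤ) m x = 0 := by
  rw [haar1_nat]
  have h1 : x ∉ Iv (j+1) (2*m) := fun hmem => hx (by
    have := Iv_subset (k := j) (j := j+1) (2*m) (Nat.le_succ j) hmem
    have e : (2*m) / 2^(j+1-j) = m := by
      norm_num
    rwa [e] at this)
  have h2 : x ∉ Iv (j+1) (2*m+1) := fun hmem => hx (by
    have := Iv_subset (k := j) (j := j+1) (2*m+1) (Nat.le_succ j) hmem
    have e : (2*m+1) / 2^(j+1-j) = m := by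
      norm_num
      omega
    rwa [e] at this)
  simp [Set.indicator_of_notMem, h1, h2]

lemma Iv_split {j m : ℕ} {x : ℝ} :
    x ∈ Iv j m ↔ (x ∈ Iv (j+1) (2*m) ∨ x ∈ Iv (j+1) (2*m+1)) := by
  simp only [Iv, Set.mem_Ico, endL, endM1, endM2, endR]
  constructor
  · rintro ⟨h1, h2⟩
    rcases lt_or_ge x (((m:ℝ)+1/2)/2^j) with h | h
    · exact Or.inl ⟨h1, h⟩
    · exact Or.inr ⟨h, h2⟩
  · have hj : (0:ℝ) < 2^j := by positivity
    have hlm : ((m:ℝ))/2^j < ((m:ℝ)+1/2)/2^j := by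
      rw [div_lt_div_iff₀ hj hj]; nlinarith
    have hmr : ((m:ℝ)+1/2)/2^j < ((m:ℝ)+1)/2^j := by
      rw [div_lt_div_iff₀ hj hj]; nlinarith
    rintro (⟨h1, h2⟩ | ⟨h1, h2⟩) <;> constructor <;> linarith

lemma haar1_sq (j m : ℕ) (x : ℝ) :
    haar1 (j:ℤ) m x * haar1 (j:ℤ) m x = (Iv j m).indicator 1 x := by
  rw [haar1_nat]
  by_cases h1 : x ∈ Iv (j+1) (2*m)
  · have h2 : x ∉ Iv (j+1) (2*m+1) := fun h2 => Iv_disjoint (by omega) h1 h2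
    have hx : x ∈ Iv j m := Iv_split.mpr (Or.inl h1)
    simp [Set.indicator_of_mem, Set.indicator_of_notMem, h1, h2, hx]
  · by_cases h2 : x ∈ Iv (j+1) (2*m+1)
    · have hx : x ∈ Iv j m := Iv_split.mpr (Or.inr h2)
      simp [Set.indicator_of_mem, Set.indicator_of_notMem, h1, h2, hx]
    · have hx : x ∉ Iv j m := fun hx => by
        rcases Iv_split.mp hx with h | h
        exacts [h1 h, h2 h]
      simp [Set.indicator_of_notMem, h1, h2, hx]

lemma Iv_subset_unit {j m : ℕ} (hm : m < 2^j) : Iv j m ⊆ Set.Icc (0:ℝ) 1 := by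
  rintro x ⟨h1, h2⟩
  have hj : (0:ℝ) < 2^j := by positivity
  have hm' : ((m:ℝ)) + 1 ≤ 2^j := by exact_mod_cast hm
  constructor
  · have : (0:ℝ) ≤ (m:ℝ)/2^j := by positivity
    linarith
  · have : ((m:ℝ)+1)/2^j ≤ 1 := by
      rw [div_le_one hj]; exact hm'
    linarith

lemma integral_Iv (j m : ℕ) (hm : m < 2^j) :
    ∫ x in Set.Icc (0:ℝ) 1, (Iv j m).indicator (1 : ℝ → ℝ) x = ((2:ℝ)^j)⁻¹ := by
  rw [MeasureTheory.setIntegral_indicator (show MeasurableSet (Iv j m) from measurableSet_Ico),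
    Set.inter_eq_self_of_subset_right (Iv_subset_unit hm)]
  have hj : (0:ℝ) < 2^j := by positivity
  simp only [Iv, Pi.one_apply, MeasureTheory.setIntegral_const, smul_eq_mul, mul_one]
  rw [MeasureTheory.measureReal_def, Real.volume_Ico, ENNReal.toReal_ofReal (by rw [sub_nonneg]; gcongr <;> linarith)]
  field_simp
  ring

lemma integral_haar1 (j m : ℕ) (hm : m < 2^j) :
    ∫ x in Set.Icc (0:ℝ) 1, haar1 (j:ℤ) m x = 0 := by
  have : ∀ x, haar1 (j:ℤ) m x =
      (Iv (j+1) (2*m)).indicator (1 : ℝ → ℝ) x - (Iv (j+1) (2*m+1)).indicator 1 x :=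
    haar1_nat j m
  rw [MeasureTheory.integral_congr_ae (Filter.Eventually.of_forall this)]
  have hI1 : MeasureTheory.Integrable ((Iv (j+1) (2*m)).indicator (1 : ℝ → ℝ))
      (MeasureTheory.volume.restrict (Set.Icc (0:ℝ) 1)) :=
    (MeasureTheory.integrable_const (1:ℝ)).indicator
      (show MeasurableSet (Iv (j+1) (2*m)) from measurableSet_Ico)
  have hI2 : MeasureTheory.Integrable ((Iv (j+1) (2*m+1)).indicator (1 : ℝ → ℝ))
      (MeasureTheory.volume.restrict (Set.Icc (0:ℝ) 1)) :=
    (MeasureTheory.integrable_const (1:ℝ)).indicator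
      (show MeasurableSet (Iv (j+1) (2*m+1)) from measurableSet_Ico)
  rw [MeasureTheory.integral_sub hI1 hI2]
  rw [integral_Iv _ _ (by omega), integral_Iv _ _ (by omega)]
  ring

lemma integral_haar1_sq (j m : ℕ) (hm : m < 2^j) :
    ∫ x in Set.Icc (0:ℝ) 1, haar1 (j:ℤ) m x * haar1 (j:ℤ) m x = ((2:ℝ)^j)⁻¹ := by
  rw [MeasureTheory.integral_congr_ae (Filter.Eventually.of_forall (haar1_sq j m))]
  exact integral_Iv j m hm

lemma haar1_const_on {j j' m m' : ℕ} (h : j < j') :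
    ∃ c : ℝ, ∀ x : ℝ, haar1 (j:ℤ) m x * haar1 (j':ℤ) m' x = c * haar1 (j':ℤ) m' x := by
  have hjj : j + 1 ≤ j' := h
  set q := m' / 2 ^ (j' - (j+1)) with hq
  have hsub : Iv j' m' ⊆ Iv (j+1) q := Iv_subset m' hjj
  have key : ∃ c : ℝ, ∀ x ∈ Iv j' m', haar1 (j:ℤ) m x = c := by
    by_cases h1 : q = 2*m
    · refine ⟨1, fun x hx => ?_⟩
      have hxq : x ∈ Iv (j+1) (2*m) := h1 ▸ hsub hx
      have hx2 : x ∉ Iv (j+1) (2*m+1) := fun h2 => Iv_disjoint (by omega) hxq h2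
      rw [haar1_nat]
      simp [Set.indicator_of_mem, Set.indicator_of_notMem, hxq, hx2]
    · by_cases h2 : q = 2*m+1
      · refine ⟨-1, fun x hx => ?_⟩
        have hxq : x ∈ Iv (j+1) (2*m+1) := h2 ▸ hsub hx
        have hx1 : x ∉ Iv (j+1) (2*m) := fun hh => Iv_disjoint (by omega) hh hxq
        rw [haar1_nat]
        simp [Set.indicator_of_mem, Set.indicator_of_notMem, hxq, hx1]
      · refine ⟨0, fun x hx => ?_⟩
        have hxq : x ∈ Iv (j+1) q := hsub hx
        have hx1 : x ∉ Iv (j+1) (2*m) := fun hh => Iv_disjoint h1 hxq hh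
        have hx2 : x ∉ Iv (j+1) (2*m+1) := fun hh => Iv_disjoint h2 hxq hh
        rw [haar1_nat]
        simp [Set.indicator_of_notMem, hx1, hx2]
  obtain ⟨c, hc⟩ := key
  refine ⟨c, fun x => ?_⟩
  by_cases hx : x ∈ Iv j' m'
  · rw [hc x hx]
  · rw [haar1_eq_zero hx]; ring

lemma integral_haar1_mul_aux {j m j' m' : ℕ} (h : j < j') (hm' : m' < 2^j') :
    ∫ x in Set.Icc (0:ℝ) 1, haar1 (j:ℤ) m x * haar1 (j':ℤ) m' x = 0 := by
  obtain ⟨c, hc⟩ := haar1_const_on (m := m) (m' := m') h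
  rw [MeasureTheory.integral_congr_ae (Filter.Eventually.of_forall hc),
    MeasureTheory.integral_const_mul, integral_haar1 _ _ hm', mul_zero]

lemma integral_haar1_mul {j m j' m' : ℕ} (hm : m < 2^j) (hm' : m' < 2^j')
    (hne : (j, m) ≠ (j', m')) :
    ∫ x in Set.Icc (0:ℝ) 1, haar1 (j:ℤ) m x * haar1 (j':ℤ) m' x = 0 := by
  rcases lt_trichotomy j j' with h | h | h
  · exact integral_haar1_mul_aux h hm'
  · subst h
    have hmm : m ≠ m' := fun hmm => hne (by rw [hmm])
    have : ∀ x : ℝ, haar1 (j:ℤ) m x * haar1 (j:ℤ) m' x = 0 := by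
      intro x
      by_cases hx : x ∈ Iv j m
      · have : x ∉ Iv j m' := fun hx' => Iv_disjoint hmm hx hx'
        rw [haar1_eq_zero this, mul_zero]
      · rw [haar1_eq_zero hx, zero_mul]
    rw [MeasureTheory.integral_congr_ae (Filter.Eventually.of_forall this)]
    simp
  · have : ∀ x : ℝ, haar1 (j:ℤ) m x * haar1 (j':ℤ) m' x
        = haar1 (j':ℤ) m' x * haar1 (j:ℤ) m x := fun x => mul_comm _ _
    rw [MeasureTheory.integral_congr_ae (Filter.Eventually.of_forall this)]
    exact integral_haar1_mul_aux h hm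

abbrev μ01 : MeasureTheory.Measure ℝ := MeasureTheory.volume.restrict (Set.Icc (0:ℝ) 1)

lemma memLp_haar (j m : ℕ) : MeasureTheory.MemLp (haar1 (j:ℤ) m) 2 μ01 :=
  MeasureTheory.MemLp.of_bound (haar1_measurable j m).aestronglyMeasurable 1
    (Filter.Eventually.of_forall fun x => by
      simpa [Real.norm_eq_abs] using haar1_abs_le (j:ℤ) m x)

def haarLp (j m : ℕ) : MeasureTheory.Lp ℝ 2 μ01 := (memLp_haar j m).toLp _

lemma inner_haarLp_left {g : ℝ → ℝ} (hg : MeasureTheory.MemLp g 2 μ01) (j m : ℕ) :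
    (inner ℝ (haarLp j m) (hg.toLp g) : ℝ)
      = ∫ x in Set.Icc (0:ℝ) 1, g x * haar1 (j:ℤ) m x := by
  rw [MeasureTheory.L2.inner_def]
  have h1 : (haarLp j m : ℝ → ℝ) =ᵐ[μ01] haar1 (j:ℤ) m := (memLp_haar j m).coeFn_toLp
  have h2 : (hg.toLp g : ℝ → ℝ) =ᵐ[μ01] g := hg.coeFn_toLp
  refine MeasureTheory.integral_congr_ae ((h1.and h2).mono fun x hx => ?_)
  simp only [RCLike.inner_apply, conj_trivial]
  rw [hx.1, hx.2, mul_comm]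

lemma inner_haarLp (j m j' m' : ℕ) :
    (inner ℝ (haarLp j m) (haarLp j' m') : ℝ)
      = ∫ x in Set.Icc (0:ℝ) 1, haar1 (j:ℤ) m x * haar1 (j':ℤ) m' x := by
  rw [show haarLp j' m' = (memLp_haar j' m').toLp _ from rfl, inner_haarLp_left, 
    MeasureTheory.integral_congr_ae (Filter.Eventually.of_forall
      (fun x => mul_comm (haar1 (j':ℤ) m' x) (haar1 (j:ℤ) m x)))]

def besselFam : (Σ j : ℕ, Fin (2^j)) → MeasureTheory.Lp ℝ 2 μ01 :=
  fun p => Real.sqrt (2^p.1) • haarLp p.1 p.2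

lemma bessel_orthonormal : Orthonormal ℝ besselFam := by
  rw [orthonormal_iff_ite]
  rintro ⟨j, m⟩ ⟨j', m'⟩
  simp only [besselFam, inner_smul_left, inner_smul_right, conj_trivial, map_mul]
  rw [inner_haarLp]
  by_cases hj : j = j'
  · subst hj
    by_cases hm : m = m'
    · subst hm
      rw [integral_haar1_sq j m m.2]
      have hs : Real.sqrt (2^j) * Real.sqrt (2^j) = 2^j :=
        Real.mul_self_sqrt (by positivity)
      have key : Real.sqrt (2^j) * (Real.sqrt (2^j) * ((2:ℝ)^j)⁻¹) = 1 := by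
        rw [← mul_assoc, hs]; field_simp
      simp [key]
    · have hfin : (m : ℕ) ≠ (m' : ℕ) := fun h => hm (Fin.ext h)
      rw [integral_haar1_mul m.2 m'.2 (by simp [hfin])]
      simp [Sigma.mk.inj_iff, hm]
  · rw [integral_haar1_mul m.2 m'.2 (by simp [hj])]
    simp [Sigma.mk.inj_iff, hj]

lemma bessel_sum {g : ℝ → ℝ} (hg : MeasureTheory.MemLp g 2 μ01) :
    (∑' j' : ℕ, ∑ m' ∈ Finset.range (2^j'),
      ENNReal.ofReal ((2:ℝ)^j' * (∫ t in Set.Icc (0:ℝ) 1, g t * haar1 (j':ℤ) m' t)^2))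
      ≤ ENNReal.ofReal (∫ t in Set.Icc (0:ℝ) 1, g t * g t) := by
  set G := hg.toLp g with hG
  have hGsq : ∫ t in Set.Icc (0:ℝ) 1, g t * g t = ‖G‖^2 := by
    rw [← real_inner_self_eq_norm_sq, MeasureTheory.L2.inner_def]
    refine MeasureTheory.integral_congr_ae (hg.coeFn_toLp.mono fun x hx => ?_)
    simp [RCLike.inner_apply, hG, hx, sq]
  have hterm : ∀ (j' : ℕ) (m' : Fin (2^j')),
      ENNReal.ofReal ((2:ℝ)^j' * (∫ t in Set.Icc (0:ℝ) 1, g t * haar1 (j':ℤ) m' t)^2)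
      = ENNReal.ofReal (‖(inner ℝ (besselFam ⟨j', m'⟩) G : ℝ)‖^2) := by
    intro j' m'
    congr 1
    rw [besselFam]
    simp only [inner_smul_left, conj_trivial, starRingEnd_apply, star_trivial]
    rw [inner_haarLp_left hg, Real.norm_eq_abs, sq_abs, mul_pow,
      Real.sq_sqrt (by positivity : (0:ℝ) ≤ 2^j')]
  calc (∑' j' : ℕ, ∑ m' ∈ Finset.range (2^j'),
      ENNReal.ofReal ((2:ℝ)^j' * (∫ t in Set.Icc (0:ℝ) 1, g t * haar1 (j':ℤ) m' t)^2))
      = ∑' p : Σ j : ℕ, Fin (2^j), ENNReal.ofReal (‖(inner ℝ (besselFam p) G : ℝ)‖^2) := by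
        rw [ENNReal.tsum_sigma']
        congr 1
        funext j'
        rw [Finset.sum_range fun m' => ENNReal.ofReal
          ((2:ℝ)^j' * (∫ t in Set.Icc (0:ℝ) 1, g t * haar1 (j':ℤ) m' t)^2), tsum_fintype]
        exact Finset.sum_congr rfl fun m' _ => hterm j' m'
    _ ≤ ENNReal.ofReal (‖G‖^2) := by
        rw [ENNReal.tsum_eq_iSup_sum]
        refine iSup_le fun s => ?_
        rw [← ENNReal.ofReal_sum_of_nonneg (fun i _ => by positivity)]
        exact ENNReal.ofReal_le_ofReal (bessel_orthonormal.sum_inner_products_le G)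
    _ = ENNReal.ofReal (∫ t in Set.Icc (0:ℝ) 1, g t * g t) := by rw [hGsq]


lemma measurableSet_unitCube (d : ℕ) : MeasurableSet (unitCube d) :=
  MeasurableSet.univ_pi fun _ => measurableSet_Icc

lemma volume_unitCube (d : ℕ) : MeasureTheory.volume (unitCube d) = 1 := by
  rw [unitCube, MeasureTheory.volume_pi_pi]
  simp [Real.volume_Icc]

instance (d : ℕ) : MeasureTheory.IsFiniteMeasure
    (MeasureTheory.volume.restrict (unitCube d)) := by
  constructor
  rw [MeasureTheory.Measure.restrict_apply_univ, volume_unitCube]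
  exact ENNReal.one_lt_top

lemma haarFn_abs_le (d : ℕ) (j : Fin d → ℤ) (m : Fin d → ℕ) (x : Fin d → ℝ) :
    |haarFn d j m x| ≤ 1 := by
  rw [haarFn, Finset.abs_prod]
  exact Finset.prod_le_one (fun i _ => abs_nonneg _) (fun i _ => haar1_abs_le _ _ _)

lemma haarFn_measurable (d : ℕ) (j : Fin d → ℕ) (m : Fin d → ℕ) :
    Measurable (haarFn d (fun i => (j i : ℤ)) m) :=
  Finset.measurable_prod _ fun i _ =>
    (haar1_measurable (j i) (m i)).comp (measurable_pi_apply i)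

/-- slice coefficient -/
def sliceCoeff (d : ℕ) (f : (Fin (d+1) → ℝ) → ℝ) (j m : Fin d → ℕ) (t : ℝ) : ℝ :=
  haarCoeff d (fun y => f (Fin.snoc y t)) (fun i => (j i : ℤ)) m

lemma snoc_comp_eta {d : ℕ} (x : Fin (d+1) → ℝ) :
    Fin.snoc (fun i : Fin d => x i.castSucc) (x (Fin.last d)) = x := by
  funext i
  induction i using Fin.lastCases with
  | last => simp
  | cast i => simp

lemma haarCoeff_slice (d : ℕ) (f : (Fin (d+1) → ℝ) → ℝ) (hmeas : Measurable f)
    {B : ℝ} (hB : ∀ x, |f x| ≤ B) (j : Fin (d+1) → ℕ) (m : Fin (d+1) → ℕ) :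
    haarCoeff (d+1) f (fun i => (j i : ℤ)) m
      = ∫ t in Set.Icc (0:ℝ) 1,
          (sliceCoeff d f (fun i => j i.castSucc) (fun i => m i.castSucc) t)
            * haar1 (j (Fin.last d) : ℤ) (m (Fin.last d)) t := by
  classical
  set e := MeasurableEquiv.piFinSuccAbove (fun _ : Fin (d+1) => ℝ) (Fin.last d) with he
  have hmp : MeasureTheory.MeasurePreserving (⇑e) MeasureTheory.volume
      ((MeasureTheory.volume : MeasureTheory.Measure ℝ).prod
        (MeasureTheory.volume : MeasureTheory.Measure (Fin d → ℝ))) := by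
    have h := MeasureTheory.measurePreserving_piFinSuccAbove
      (fun _ : Fin (d+1) => (MeasureTheory.volume : MeasureTheory.Measure ℝ)) (Fin.last d)
    simpa only [← MeasureTheory.volume_pi] using h
  set G : ℝ × (Fin d → ℝ) → ℝ := fun p =>
    (f (Fin.snoc p.2 p.1) * haarFn d (fun i => (j i.castSucc : ℤ)) (fun i => m i.castSucc) p.2)
      * haar1 (j (Fin.last d) : ℤ) (m (Fin.last d)) p.1 with hGdef
  have hsnoc_meas : Measurable (fun p : ℝ × (Fin d → ℝ) => (Fin.snoc p.2 p.1 : Fin (d+1) → ℝ)) := by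
    apply measurable_pi_lambda
    intro i
    induction i using Fin.lastCases with
    | last => simpa [Fin.snoc_last] using measurable_fst
    | cast i => simp only [Fin.snoc_castSucc]; exact (measurable_pi_apply i).comp measurable_snd
  have hGmeas : Measurable G := by
    apply Measurable.mul
    · exact (hmeas.comp hsnoc_meas).mul
        ((haarFn_measurable d (fun i => j i.castSucc) (fun i => m i.castSucc)).comp measurable_snd)
    · exact (haar1_measurable _ _).comp measurable_fst
  have hpre : ⇑e ⁻¹' ((Set.Icc (0:ℝ) 1) ×ˢ (unitCube d)) = unitCube (d+1) := by
    ext x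
    simp only [Set.mem_preimage, Set.mem_prod, unitCube, Set.mem_pi, Set.mem_univ,
      forall_true_left, he, MeasurableEquiv.piFinSuccAbove_apply, Fin.insertNthEquiv_symm_apply,
      Fin.removeNth, Fin.succAbove_last]
    constructor
    · rintro ⟨h1, h2⟩ i
      induction i using Fin.lastCases with
      | last => exact h1
      | cast i => exact h2 i
    · intro h
      exact ⟨h _, fun i => h _⟩
  have hcomp : ∀ x, f x * haarFn (d+1) (fun i => (j i : ℤ)) m x = G (e x) := by
    intro x
    have hx : (Fin.snoc (fun i : Fin d => x i.castSucc) (x (Fin.last d)) : Fin (d+1) → ℝ) = x :=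
      snoc_comp_eta x
    have hx' : (Fin.last d).removeNth x = fun i : Fin d => x i.castSucc := by
      funext i
      simp [Fin.removeNth, Fin.succAbove_last]
    simp only [hGdef, he, MeasurableEquiv.piFinSuccAbove_apply, Fin.insertNthEquiv_symm_apply]
    rw [hx', hx]
    rw [haarFn, haarFn, Fin.prod_univ_castSucc]
    ring
  rw [haarCoeff]
  calc ∫ x in unitCube (d+1), f x * haarFn (d+1) (fun i => (j i : ℤ)) m x
      = ∫ x in ⇑e ⁻¹' ((Set.Icc (0:ℝ) 1) ×ˢ (unitCube d)), G (e x) := by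
        rw [hpre]
        exact MeasureTheory.integral_congr_ae (Filter.Eventually.of_forall hcomp)
    _ = ∫ p in (Set.Icc (0:ℝ) 1) ×ˢ (unitCube d), G p := by
        exact hmp.setIntegral_preimage_emb e.measurableEmbedding G _
    _ = ∫ t in Set.Icc (0:ℝ) 1, ∫ y in unitCube d, G (t, y) := by
        rw [MeasureTheory.Measure.volume_eq_prod, ← MeasureTheory.Measure.prod_restrict]
        haveI : MeasureTheory.IsFiniteMeasure
            (MeasureTheory.volume.restrict (Set.Icc (0:ℝ) 1)) := by
          constructor
          rw [MeasureTheory.Measure.restrict_apply_univ, Real.volume_Icc]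
          exact ENNReal.ofReal_lt_top
        apply MeasureTheory.integral_prod
        refine MeasureTheory.memLp_one_iff_integrable.mp ?_
        refine MeasureTheory.MemLp.of_bound hGmeas.aestronglyMeasurable (|B|) ?_
        refine Filter.Eventually.of_forall fun p => ?_
        have h1 := hB (Fin.snoc p.2 p.1)
        have h2 := haarFn_abs_le d (fun i => (j i.castSucc : ℤ)) (fun i => m i.castSucc) p.2
        have h3 := haar1_abs_le (j (Fin.last d) : ℤ) (m (Fin.last d)) p.1
        have hBa : |f (Fin.snoc p.2 p.1)| ≤ |B| := h1.trans (le_abs_self B)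
        rw [Real.norm_eq_abs, hGdef]
        calc |(f (Fin.snoc p.2 p.1) * haarFn d _ _ p.2) * haar1 _ _ p.1|
            = |f (Fin.snoc p.2 p.1)| * |haarFn d _ _ p.2| * |haar1 _ _ p.1| := by
              rw [abs_mul, abs_mul]
          _ ≤ |B| * 1 * 1 := by
              apply mul_le_mul (mul_le_mul hBa h2 (abs_nonneg _) (abs_nonneg _)) h3
                (abs_nonneg _) (by positivity)
          _ = |B| := by ring
    _ = ∫ t in Set.Icc (0:ℝ) 1,
          (sliceCoeff d f (fun i => j i.castSucc) (fun i => m i.castSucc) t)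
            * haar1 (j (Fin.last d) : ℤ) (m (Fin.last d)) t := by
        apply MeasureTheory.integral_congr_ae
        refine Filter.Eventually.of_forall fun t => ?_
        simp only [hGdef, sliceCoeff, haarCoeff]
        rw [MeasureTheory.integral_mul_const]

lemma measurable_snoc_fix (d : ℕ) (t : ℝ) :
    Measurable (fun y : Fin d → ℝ => (Fin.snoc y t : Fin (d+1) → ℝ)) := by
  apply measurable_pi_lambda
  intro i
  induction i using Fin.lastCases with
  | last => simpa [Fin.snoc_last] using measurable_const
  | cast i => simpa [Fin.snoc_castSucc] using measurable_pi_apply i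

lemma sliceCoeff_abs_le (d : ℕ) (f : (Fin (d+1) → ℝ) → ℝ) (hmeas : Measurable f) {B : ℝ}
    (hB : ∀ x, |f x| ≤ B) (j m : Fin d → ℕ) (t : ℝ) :
    |sliceCoeff d f j m t| ≤ |B| := by
  have hvol : MeasureTheory.volume (unitCube d) < ⊤ := by
    rw [volume_unitCube]; exact ENNReal.one_lt_top
  have key : ‖∫ y in unitCube d, f (Fin.snoc y t) * haarFn d (fun i => (j i : ℤ)) m y‖
      ≤ |B| * (MeasureTheory.volume (unitCube d)).toReal := by
    apply MeasureTheory.norm_setIntegral_le_of_norm_le_const hvol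
    · intro y _
      rw [Real.norm_eq_abs, abs_mul]
      calc |f (Fin.snoc y t)| * |haarFn d (fun i => (j i : ℤ)) m y|
          ≤ |B| * 1 := mul_le_mul ((hB _).trans (le_abs_self B)) (haarFn_abs_le _ _ _ _)
            (abs_nonneg _) (abs_nonneg _)
        _ = |B| := mul_one _
  rw [volume_unitCube] at key
  simpa [sliceCoeff, haarCoeff, Real.norm_eq_abs] using key

lemma sliceCoeff_measurable (d : ℕ) (f : (Fin (d+1) → ℝ) → ℝ) (hmeas : Measurable f)
    (j m : Fin d → ℕ) : Measurable (sliceCoeff d f j m) := by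
  have hsnoc : Measurable (fun p : ℝ × (Fin d → ℝ) => (Fin.snoc p.2 p.1 : Fin (d+1) → ℝ)) := by
    apply measurable_pi_lambda
    intro i
    induction i using Fin.lastCases with
    | last => simpa [Fin.snoc_last] using measurable_fst
    | cast i => simp only [Fin.snoc_castSucc]; exact (measurable_pi_apply i).comp measurable_snd
  have h : MeasureTheory.StronglyMeasurable
      (fun p : ℝ × (Fin d → ℝ) =>
        f (Fin.snoc p.2 p.1) * haarFn d (fun i => (j i : ℤ)) m p.2) :=
    ((hmeas.comp hsnoc).mul
      ((haarFn_measurable d j m).comp measurable_snd)).stronglyMeasurable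
  have := h.integral_prod_right' (ν := MeasureTheory.volume.restrict (unitCube d))
  exact this.measurable

lemma memLp_sliceCoeff (d : ℕ) (f : (Fin (d+1) → ℝ) → ℝ) (hmeas : Measurable f) {B : ℝ}
    (hB : ∀ x, |f x| ≤ B) (j m : Fin d → ℕ) :
    MeasureTheory.MemLp (sliceCoeff d f j m) 2 μ01 :=
  MeasureTheory.MemLp.of_bound (sliceCoeff_measurable d f hmeas j m).aestronglyMeasurable (|B|)
    (Filter.Eventually.of_forall fun t => by
      simpa [Real.norm_eq_abs] using sliceCoeff_abs_le d f hmeas hB j m t)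

lemma bessel_lintegral (d : ℕ) (f : (Fin (d+1) → ℝ) → ℝ) (hmeas : Measurable f) {B : ℝ}
    (hB : ∀ x, |f x| ≤ B) (jb mb : Fin d → ℕ) :
    (∑' j' : ℕ, ∑ m' ∈ Finset.range (2^j'),
      ENNReal.ofReal ((2:ℝ)^j' *
        (∫ t in Set.Icc (0:ℝ) 1, sliceCoeff d f jb mb t * haar1 (j':ℤ) m' t)^2))
      ≤ ∫⁻ t in Set.Icc (0:ℝ) 1, ENNReal.ofReal ((sliceCoeff d f jb mb t)^2) := by
  set g := sliceCoeff d f jb mb with hg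
  have hgmeas : Measurable g := sliceCoeff_measurable d f hmeas jb mb
  have hint : MeasureTheory.Integrable (fun t => g t * g t) μ01 := by
    refine MeasureTheory.memLp_one_iff_integrable.mp ?_
    refine MeasureTheory.MemLp.of_bound (hgmeas.mul hgmeas).aestronglyMeasurable (|B| * |B|) ?_
    refine Filter.Eventually.of_forall fun t => ?_
    rw [Real.norm_eq_abs, abs_mul]
    have h := sliceCoeff_abs_le d f hmeas hB jb mb t
    exact mul_le_mul h h (abs_nonneg _) (abs_nonneg _)
  refine (bessel_sum (memLp_sliceCoeff d f hmeas hB jb mb)).trans (le_of_eq ?_)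
  rw [MeasureTheory.ofReal_integral_eq_lintegral_ofReal hint
    (Filter.Eventually.of_forall fun t => mul_self_nonneg (g t))]
  apply MeasureTheory.lintegral_congr fun t => ?_
  rw [sq]

lemma sum_piFinset_snoc {d : ℕ} {M : Type*} [AddCommMonoid M] (p : Fin (d+1) → ℕ)
    (F : (Fin (d+1) → ℕ) → M) :
    ∑ m ∈ Fintype.piFinset (fun i => Finset.range (p i)), F m
      = ∑ a ∈ Fintype.piFinset (fun i : Fin d => Finset.range (p i.castSucc)),
          ∑ b ∈ Finset.range (p (Fin.last d)), F (Fin.snoc a b) := by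
  classical
  rw [← Finset.sum_product']
  refine Finset.sum_nbij' (fun m => (fun i => m i.castSucc, m (Fin.last d)))
    (fun q => Fin.snoc q.1 q.2) ?_ ?_ ?_ ?_ ?_
  · intro m hm
    rw [Fintype.mem_piFinset] at hm
    rw [Finset.mem_product, Fintype.mem_piFinset]
    exact ⟨fun i => hm _, hm _⟩
  · intro q hq
    rw [Finset.mem_product, Fintype.mem_piFinset] at hq
    rw [Fintype.mem_piFinset]
    intro i
    induction i using Fin.lastCases with
    | last => simpa [Fin.snoc_last] using hq.2
    | cast i => simpa [Fin.snoc_castSucc] using hq.1 i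
  · intro m _
    funext i
    induction i using Fin.lastCases with
    | last => simp
    | cast i => simp
  · intro q _
    simp
  · intro m _
    congr 1
    funext i
    induction i using Fin.lastCases with
    | last => simp
    | cast i => simp

def snocEquivNat (d : ℕ) : (Fin d → ℕ) × ℕ ≃ (Fin (d+1) → ℕ) where
  toFun q := Fin.snoc q.1 q.2
  invFun j := (fun i => j i.castSucc, j (Fin.last d))
  left_inv q := by
    ext
    · simp
    · simp
  right_inv j := by
    funext i
    induction i using Fin.lastCases with
    | last => simp
    | cast i => simp

lemma dNormSq_slice_le (d : ℕ) (f : (Fin (d+1) → ℝ) → ℝ) (hmeas : Measurable f)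
    {B : ℝ} (hB : ∀ x, |f x| ≤ B) :
    dNormSq (d+1) f ≤ ∫⁻ t in Set.Icc (0:ℝ) 1,
      dNormSq d (fun y => f (Fin.snoc y t)) := by
  classical
  set g : (Fin d → ℕ) → (Fin d → ℕ) → ℝ → ℝ := fun jb mb => sliceCoeff d f jb mb with hgdef
  have hgmeas : ∀ jb mb, Measurable (g jb mb) := fun jb mb =>
    sliceCoeff_measurable d f hmeas jb mb
  -- step 1: rewrite dNormSq (d+1) f
  have step1 : dNormSq (d+1) f
      = ∑' jb : Fin d → ℕ, ∑' j' : ℕ, ∑ mb ∈ Dfin0 d jb, ∑ m' ∈ Finset.range (2^j'),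
          ENNReal.ofReal ((2:ℝ)^(∑ i, jb i) * ((2:ℝ)^j' *
            (∫ t in Set.Icc (0:ℝ) 1, g jb mb t * haar1 (j':ℤ) m' t)^2)) := by
    rw [dNormSq, ← Equiv.tsum_eq (snocEquivNat d), ENNReal.tsum_prod']
    congr 1
    funext jb
    congr 1
    funext j'
    have hsnoc : ⇑(snocEquivNat d) (jb, j') = (Fin.snoc jb j' : Fin (d+1) → ℕ) := rfl
    rw [hsnoc, Dfin0, sum_piFinset_snoc (fun i => 2 ^ (Fin.snoc jb j' : Fin (d+1) → ℕ) i)]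
    simp only [Fin.snoc_castSucc, Fin.snoc_last]
    apply Finset.sum_congr rfl
    intro mb hmb
    apply Finset.sum_congr rfl
    intro m' hm'
    congr 1
    have hexp : (∑ i : Fin (d+1), (Fin.snoc jb j' : Fin (d+1) → ℕ) i)
        = (∑ i, jb i) + j' := by
      rw [Fin.sum_univ_castSucc]
      simp
    have hco : haarCoeff (d+1) f (fun i => ((Fin.snoc jb j' : Fin (d+1) → ℕ) i : ℤ))
        (Fin.snoc mb m')
        = ∫ t in Set.Icc (0:ℝ) 1, g jb mb t * haar1 (j':ℤ) m' t := by
      rw [haarCoeff_slice d f hmeas hB (Fin.snoc jb j') (Fin.snoc mb m')]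
      simp only [Fin.snoc_castSucc, Fin.snoc_last, hgdef]
    rw [hexp, hco, pow_add]
    ring
  rw [step1]
  -- step 2: bound the inner double tsum for fixed jb
  have step2 : ∀ jb : Fin d → ℕ,
      (∑' j' : ℕ, ∑ mb ∈ Dfin0 d jb, ∑ m' ∈ Finset.range (2^j'),
        ENNReal.ofReal ((2:ℝ)^(∑ i, jb i) * ((2:ℝ)^j' *
          (∫ t in Set.Icc (0:ℝ) 1, g jb mb t * haar1 (j':ℤ) m' t)^2)))
      ≤ ∑ mb ∈ Dfin0 d jb, ∫⁻ t in Set.Icc (0:ℝ) 1,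
          ENNReal.ofReal ((2:ℝ)^(∑ i, jb i) * (g jb mb t)^2) := by
    intro jb
    rw [Summable.tsum_finsetSum (fun mb _ => ENNReal.summable)]
    apply Finset.sum_le_sum
    intro mb _
    have hpow : (0:ℝ) ≤ (2:ℝ)^(∑ i, jb i) := by positivity
    calc (∑' j' : ℕ, ∑ m' ∈ Finset.range (2^j'),
          ENNReal.ofReal ((2:ℝ)^(∑ i, jb i) * ((2:ℝ)^j' *
            (∫ t in Set.Icc (0:ℝ) 1, g jb mb t * haar1 (j':ℤ) m' t)^2)))
        = ENNReal.ofReal ((2:ℝ)^(∑ i, jb i)) * ∑' j' : ℕ, ∑ m' ∈ Finset.range (2^j'),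
            ENNReal.ofReal ((2:ℝ)^j' *
              (∫ t in Set.Icc (0:ℝ) 1, g jb mb t * haar1 (j':ℤ) m' t)^2) := by
          rw [← ENNReal.tsum_mul_left]
          congr 1
          funext j'
          rw [Finset.mul_sum]
          apply Finset.sum_congr rfl
          intro m' _
          rw [← ENNReal.ofReal_mul hpow]
      _ ≤ ENNReal.ofReal ((2:ℝ)^(∑ i, jb i)) * ∫⁻ t in Set.Icc (0:ℝ) 1,
            ENNReal.ofReal ((g jb mb t)^2) := by
          exact mul_le_mul_of_nonneg_left (bessel_lintegral d f hmeas hB jb mb) zero_le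
      _ = ∫⁻ t in Set.Icc (0:ℝ) 1,
            ENNReal.ofReal ((2:ℝ)^(∑ i, jb i) * (g jb mb t)^2) := by
          rw [← MeasureTheory.lintegral_const_mul]
          · apply MeasureTheory.lintegral_congr fun t => ?_
            rw [← ENNReal.ofReal_mul hpow]
          · exact ENNReal.measurable_ofReal.comp ((hgmeas jb mb).pow_const 2)
  -- step 3: combine
  calc (∑' jb : Fin d → ℕ, ∑' j' : ℕ, ∑ mb ∈ Dfin0 d jb, ∑ m' ∈ Finset.range (2^j'),
        ENNReal.ofReal ((2:ℝ)^(∑ i, jb i) * ((2:ℝ)^j' *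
          (∫ t in Set.Icc (0:ℝ) 1, g jb mb t * haar1 (j':ℤ) m' t)^2)))
      ≤ ∑' jb : Fin d → ℕ, ∑ mb ∈ Dfin0 d jb, ∫⁻ t in Set.Icc (0:ℝ) 1,
          ENNReal.ofReal ((2:ℝ)^(∑ i, jb i) * (g jb mb t)^2) :=
        ENNReal.tsum_le_tsum step2
    _ = ∑' jb : Fin d → ℕ, ∫⁻ t in Set.Icc (0:ℝ) 1, ∑ mb ∈ Dfin0 d jb,
          ENNReal.ofReal ((2:ℝ)^(∑ i, jb i) * (g jb mb t)^2) := by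
        congr 1
        funext jb
        rw [← MeasureTheory.lintegral_finset_sum]
        intro mb _
        exact ENNReal.measurable_ofReal.comp (((hgmeas jb mb).pow_const 2).const_mul _)
    _ = ∫⁻ t in Set.Icc (0:ℝ) 1, ∑' jb : Fin d → ℕ, ∑ mb ∈ Dfin0 d jb,
          ENNReal.ofReal ((2:ℝ)^(∑ i, jb i) * (g jb mb t)^2) := by
        rw [← MeasureTheory.lintegral_tsum]
        intro jb
        apply Measurable.aemeasurable
        apply Finset.measurable_sum
        intro mb _
        exact ENNReal.measurable_ofReal.comp (((hgmeas jb mb).pow_const 2).const_mul _)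
    _ = ∫⁻ t in Set.Icc (0:ℝ) 1, dNormSq d (fun y => f (Fin.snoc y t)) := by
        apply MeasureTheory.lintegral_congr fun t => ?_
        rw [dNormSq]
        rfl
end DSlice


/-- For a bounded measurable `f : [0,1]^{d+1} → ℝ`,
`‖f | 𝒟₀^{d+1}‖ ≤ sup_{t ∈ [0,1]} ‖f(·,t) | 𝒟₀^d‖`. -/
theorem dnorm_slice (d : ℕ) (hd : 0 < d) (f : (Fin (d+1) → ℝ) → ℝ)
    (hmeas : Measurable f) (hbd : ∃ B : ℝ, ∀ x, |f x| ≤ B) :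
    dNorm (d+1) f ≤ ⨆ t : Set.Icc (0:ℝ) 1, dNorm d (fun y => f (Fin.snoc y (t:ℝ))) := by
  obtain ⟨B, hB⟩ := hbd
  have key := DSlice.dNormSq_slice_le d f hmeas hB
  set S := ⨆ t : Set.Icc (0:ℝ) 1, dNorm d (fun y => f (Fin.snoc y (t:ℝ))) with hS
  have h2 : (∫⁻ t in Set.Icc (0:ℝ) 1, dNormSq d (fun y => f (Fin.snoc y t)))
      ≤ S ^ (2:ℝ) := by
    have hb : ∀ t ∈ Set.Icc (0:ℝ) 1, dNormSq d (fun y => f (Fin.snoc y t)) ≤ S ^ (2:ℝ) := by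
      intro t ht
      have h1 : dNorm d (fun y => f (Fin.snoc y t)) ≤ S :=
        le_iSup (fun u : Set.Icc (0:ℝ) 1 => dNorm d (fun y => f (Fin.snoc y (u:ℝ)))) ⟨t, ht⟩
      have h1' := ENNReal.rpow_le_rpow h1 (by norm_num : (0:ℝ) ≤ 2)
      rw [dNorm, ← ENNReal.rpow_mul] at h1'
      norm_num at h1'
      have hcast : S ^ (2:ℝ) = S ^ (2:ℕ) := by
        rw [← ENNReal.rpow_natCast]; norm_num
      rw [hcast]
      exact h1'
    calc (∫⁻ t in Set.Icc (0:ℝ) 1, dNormSq d (fun y => f (Fin.snoc y t)))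
        ≤ ∫⁻ _ in Set.Icc (0:ℝ) 1, S ^ (2:ℝ) :=
          MeasureTheory.setLIntegral_mono measurable_const hb
      _ = S ^ (2:ℝ) * MeasureTheory.volume (Set.Icc (0:ℝ) 1) :=
          MeasureTheory.setLIntegral_const _ _
      _ = S ^ (2:ℝ) := by simp [Real.volume_Icc]
  have h3 : dNormSq (d+1) f ≤ S ^ (2:ℝ) := key.trans h2
  calc dNorm (d+1) f = (dNormSq (d+1) f) ^ (1/2:ℝ) := rfl
    _ ≤ (S ^ (2:ℝ)) ^ (1/2:ℝ) := ENNReal.rpow_le_rpow h3 (by norm_num)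
    _ = S := by
        rw [← ENNReal.rpow_mul]
        norm_num

end
end
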